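/- arXiv:1511.08369 — 7 statements merged into one kernel-verified Lean document; each statement's English description precedes it below -/
import Mathlib

section
/- Computation of the second-order term for discrete covariates: define the second-order gradient D⁽²⁾(P)((w₁,a₁,y₁),(w₂,a₂,y₂)) := 2·a₁·𝟙{w₁ = w₂} / (g(w₁)·q_W(w₁)) · (1 − a₂/g(w₁)) · (y₁ − Q̄(w₁)). Then the expectation of D⁽²⁾(P) under the product measure P₀ × P₀, for two independent observations O₁, O₂ ~ P₀, equals 2 ∑_w q₀(w)² · g₀(w) · (1 − g₀(w)/g(w)) · (Q̄₀(w) − Q̄(w)) / (g(w) · q_W(w)). -/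
open Finset

/-- **Computation of the second-order term for discrete covariates.**
`W` finite, observed data `O = (w,a,y) ∈ W × {0,1} × {0,1}` with law
`P₀(w,a,y) = q₀(w)·[a·g₀(w)·Qbar0(w)^y·(1−Qbar0(w))^{1−y} + (1−a)·(1−g₀(w))·𝟙{y=0}]`.
With second-order gradient
`D⁽²⁾((w₁,a₁,y₁),(w₂,a₂,y₂)) = 2·a₁·𝟙{w₁=w₂}/(g(w₁)·qW(w₁))·(1 − a₂/g(w₁))·(y₁ − Qbar(w₁))`,
its expectation under `P₀ × P₀` equals
`2 ∑_w q₀(w)²·g₀(w)·(1 − g₀(w)/g(w))·(Qbar0(w) − Qbar(w))/(g(w)·qW(w))`. -/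
theorem second_order_term_discrete
    {W : Type*} [Fintype W] [DecidableEq W]
    (q₀ qW g₀ g Qbar0 Qbar : W → ℝ)
    (hq₀pos : ∀ w, 0 < q₀ w) (hq₀sum : ∑ w, q₀ w = 1)
    (hqWpos : ∀ w, 0 < qW w) (hqWsum : ∑ w, qW w = 1)
    (hg₀0 : ∀ w, 0 ≤ g₀ w) (hg₀1 : ∀ w, g₀ w ≤ 1)
    (hQbar00 : ∀ w, 0 ≤ Qbar0 w) (hQbar01 : ∀ w, Qbar0 w ≤ 1)
    (hgpos : ∀ w, 0 < g w) (hg1 : ∀ w, g w ≤ 1)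
    (p : W × Fin 2 × Fin 2 → ℝ)
    (hp : ∀ o : W × Fin 2 × Fin 2,
      p o = q₀ o.1 * (((o.2.1 : ℕ) : ℝ) * g₀ o.1 * Qbar0 o.1 ^ ((o.2.2 : ℕ))
              * (1 - Qbar0 o.1) ^ (1 - (o.2.2 : ℕ))
            + (1 - ((o.2.1 : ℕ) : ℝ)) * (1 - g₀ o.1)
              * (if (o.2.2 : ℕ) = 0 then (1 : ℝ) else 0)))
    (D2 : (W × Fin 2 × Fin 2) → (W × Fin 2 × Fin 2) → ℝ)
    (hD2 : ∀ o₁ o₂ : W × Fin 2 × Fin 2,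
      D2 o₁ o₂ = 2 * ((o₁.2.1 : ℕ) : ℝ) * (if o₁.1 = o₂.1 then (1 : ℝ) else 0)
          / (g o₁.1 * qW o₁.1) * (1 - ((o₂.2.1 : ℕ) : ℝ) / g o₁.1)
          * (((o₁.2.2 : ℕ) : ℝ) - Qbar o₁.1)) :
    ∑ o₁ : W × Fin 2 × Fin 2, ∑ o₂ : W × Fin 2 × Fin 2, p o₁ * p o₂ * D2 o₁ o₂ =
      2 * ∑ w, q₀ w ^ 2 * g₀ w * (1 - g₀ w / g w) * (Qbar0 w - Qbar w)
        / (g w * qW w) := by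
  have key : ∀ o₁ : W × Fin 2 × Fin 2, ∑ o₂ : W × Fin 2 × Fin 2, p o₁ * p o₂ * D2 o₁ o₂
      = ∑ a₂ : Fin 2, ∑ y₂ : Fin 2, p o₁ * p (o₁.1, a₂, y₂) * D2 o₁ (o₁.1, a₂, y₂) := by
    intro o₁
    rw [Fintype.sum_prod_type]
    rw [Finset.sum_eq_single o₁.1]
    · simp [Fintype.sum_prod_type]
    · intro b _ hb
      apply Finset.sum_eq_zero; intro a₂ _
      rw [hD2]
      have : o₁.1 ≠ b := fun h => hb h.symm
      simp [this]
    · intro h; exact absurd (Finset.mem_univ _) h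
  simp only [key]
  simp only [hp, hD2, Fintype.sum_prod_type, Fin.sum_univ_two, Fin.val_zero,
    Fin.val_one, Nat.cast_zero, Nat.cast_one, pow_zero, pow_one, if_true]
  rw [show (2:ℝ) * ∑ w, q₀ w ^ 2 * g₀ w * (1 - g₀ w / g w) * (Qbar0 w - Qbar w)
        / (g w * qW w) = ∑ w, 2 * (q₀ w ^ 2 * g₀ w * (1 - g₀ w / g w) * (Qbar0 w - Qbar w)
        / (g w * qW w)) from by rw [Finset.mul_sum]]
  refine Finset.sum_congr rfl fun w₁ _ => ?_
  have hg := (hgpos w₁).ne'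
  have hqW := (hqWpos w₁).ne'
  field_simp
  simp only [one_ne_zero, if_false]
  ring
end

section
/- Second-order expansion of the mean-outcome functional for discrete covariates: define Ψ(Q) := ∑_w q_W(w)·Q̄(w), ψ₀ := ∑_w q₀(w)·Q̄₀(w), D⁽¹⁾(P)(w,a,y) := (a/g(w))·(y − Q̄(w)) + Q̄(w) − Ψ(Q), D⁽²⁾(P)((w₁,a₁,y₁),(w₂,a₂,y₂)) := 2·a₁·𝟙{w₁ = w₂}/(g(w₁)·q_W(w₁))·(1 − a₂/g(w₁))·(y₁ − Q̄(w₁)), and the third-order remainder R₃(P,P₀) := ∑_w q₀(w)·(1 − g₀(w)q₀(w)/(g(w)q_W(w)))·(1 − g₀(w)/g(w))·(Q̄(w) − Q̄₀(w)). Then Ψ(Q) − ψ₀ = −E_{P₀}[D⁽¹⁾(P)(O)] − (1/2)·E_{P₀×P₀}[D⁽²⁾(P)(O₁,O₂)] + R₃(P,P₀). -/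
open Finset

/-- **Second-order expansion of the mean-outcome functional for discrete covariates.**
`W` finite, observed data `O = (w,a,y) ∈ W × {0,1} × {0,1}` with law
`P₀(w,a,y) = q₀(w)·[a·g₀(w)·Qbar0(w)^y·(1−Qbar0(w))^{1−y} + (1−a)·(1−g₀(w))·𝟙{y=0}]`.
With `Ψ := ∑_w qW(w)·Qbar(w)`, `ψ₀ := ∑_w q₀(w)·Qbar0(w)`,
`D⁽¹⁾(w,a,y) := (a/g(w))·(y − Qbar(w)) + Qbar(w) − Ψ`,
`D⁽²⁾((w₁,a₁,y₁),(w₂,a₂,y₂)) := 2·a₁·𝟙{w₁=w₂}/(g(w₁)·qW(w₁))·(1 − a₂/g(w₁))·(y₁ − Qbar(w₁))`,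
and `R₃ := ∑_w q₀(w)·(1 − g₀(w)q₀(w)/(g(w)qW(w)))·(1 − g₀(w)/g(w))·(Qbar(w) − Qbar0(w))`,
we have `Ψ − ψ₀ = −E_{P₀}[D⁽¹⁾] − (1/2)·E_{P₀×P₀}[D⁽²⁾] + R₃`. -/
theorem second_order_expansion_discrete
    {W : Type*} [Fintype W] [DecidableEq W]
    (q₀ qW g₀ g Qbar0 Qbar : W → ℝ)
    (hq₀pos : ∀ w, 0 < q₀ w) (hq₀sum : ∑ w, q₀ w = 1)
    (hqWpos : ∀ w, 0 < qW w) (hqWsum : ∑ w, qW w = 1)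
    (hg₀0 : ∀ w, 0 ≤ g₀ w) (hg₀1 : ∀ w, g₀ w ≤ 1)
    (hQbar00 : ∀ w, 0 ≤ Qbar0 w) (hQbar01 : ∀ w, Qbar0 w ≤ 1)
    (hgpos : ∀ w, 0 < g w) (hg1 : ∀ w, g w ≤ 1)
    (p : W × Fin 2 × Fin 2 → ℝ)
    (hp : ∀ o : W × Fin 2 × Fin 2,
      p o = q₀ o.1 * (((o.2.1 : ℕ) : ℝ) * g₀ o.1 * Qbar0 o.1 ^ ((o.2.2 : ℕ))
              * (1 - Qbar0 o.1) ^ (1 - (o.2.2 : ℕ))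
            + (1 - ((o.2.1 : ℕ) : ℝ)) * (1 - g₀ o.1)
              * (if (o.2.2 : ℕ) = 0 then (1 : ℝ) else 0)))
    (D1 : W × Fin 2 × Fin 2 → ℝ)
    (hD1 : ∀ o : W × Fin 2 × Fin 2,
      D1 o = ((o.2.1 : ℕ) : ℝ) / g o.1 * (((o.2.2 : ℕ) : ℝ) - Qbar o.1)
          + Qbar o.1 - ∑ w, qW w * Qbar w)
    (D2 : (W × Fin 2 × Fin 2) → (W × Fin 2 × Fin 2) → ℝ)
    (hD2 : ∀ o₁ o₂ : W × Fin 2 × Fin 2,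
      D2 o₁ o₂ = 2 * ((o₁.2.1 : ℕ) : ℝ) * (if o₁.1 = o₂.1 then (1 : ℝ) else 0)
          / (g o₁.1 * qW o₁.1) * (1 - ((o₂.2.1 : ℕ) : ℝ) / g o₁.1)
          * (((o₁.2.2 : ℕ) : ℝ) - Qbar o₁.1)) :
    (∑ w, qW w * Qbar w) - (∑ w, q₀ w * Qbar0 w) =
      -(∑ o : W × Fin 2 × Fin 2, p o * D1 o)
      - (1 / 2) * (∑ o₁ : W × Fin 2 × Fin 2, ∑ o₂ : W × Fin 2 × Fin 2,
          p o₁ * p o₂ * D2 o₁ o₂)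
      + ∑ w, q₀ w * (1 - g₀ w * q₀ w / (g w * qW w)) * (1 - g₀ w / g w)
          * (Qbar w - Qbar0 w) := by
  have hg1ne : ∀ w, g w ≠ 0 := fun w => (hgpos w).ne'
  have hqWne : ∀ w, qW w ≠ 0 := fun w => (hqWpos w).ne'
  have h1 : ∑ o : W × Fin 2 × Fin 2, p o * D1 o
      = ∑ w, q₀ w * (g₀ w / g w * (Qbar0 w - Qbar w) + Qbar w - ∑ v, qW v * Qbar v) := by
    rw [Fintype.sum_prod_type]
    refine Finset.sum_congr rfl fun w _ => ?_
    rw [Fintype.sum_prod_type]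
    simp only [Fin.sum_univ_two, hp, hD1]
    simp
    field_simp
    ring
  have h2 : ∀ o₁ : W × Fin 2 × Fin 2, ∑ o₂ : W × Fin 2 × Fin 2, p o₂ * D2 o₁ o₂
      = 2 * ((o₁.2.1 : ℕ) : ℝ) * q₀ o₁.1 / (g o₁.1 * qW o₁.1) * (1 - g₀ o₁.1 / g o₁.1)
        * (((o₁.2.2 : ℕ) : ℝ) - Qbar o₁.1) := by
    intro o₁
    rw [Fintype.sum_prod_type]
    rw [Finset.sum_eq_single o₁.1]
    · rw [Fintype.sum_prod_type]
      simp only [Fin.sum_univ_two, hp, hD2]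
      simp
      field_simp
      ring
    · intro b _ hb
      rw [Fintype.sum_prod_type]
      simp only [Fin.sum_univ_two, hp, hD2]
      simp [Ne.symm hb]
    · intro h; exact absurd (Finset.mem_univ _) h
  have h3 : ∑ o₁ : W × Fin 2 × Fin 2, ∑ o₂ : W × Fin 2 × Fin 2, p o₁ * p o₂ * D2 o₁ o₂
      = ∑ w, 2 * q₀ w ^ 2 * g₀ w / (g w * qW w) * (1 - g₀ w / g w) * (Qbar0 w - Qbar w) := by
    have e : ∀ o₁ : W × Fin 2 × Fin 2, ∑ o₂ : W × Fin 2 × Fin 2, p o₁ * p o₂ * D2 o₁ o₂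
        = p o₁ * (2 * ((o₁.2.1 : ℕ) : ℝ) * q₀ o₁.1 / (g o₁.1 * qW o₁.1)
            * (1 - g₀ o₁.1 / g o₁.1) * (((o₁.2.2 : ℕ) : ℝ) - Qbar o₁.1)) := by
      intro o₁
      rw [← h2 o₁, Finset.mul_sum]
      exact Finset.sum_congr rfl fun o₂ _ => (mul_assoc _ _ _)
    simp only [e]
    rw [Fintype.sum_prod_type]
    refine Finset.sum_congr rfl fun w _ => ?_
    rw [Fintype.sum_prod_type]
    simp only [Fin.sum_univ_two, hp]
    simp
    field_simp
    ring
  have hsub : ∑ w, q₀ w * (g₀ w / g w * (Qbar0 w - Qbar w) + Qbar w - ∑ v, qW v * Qbar v)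
      = (∑ w, q₀ w * (g₀ w / g w * (Qbar0 w - Qbar w) + Qbar w)) - ∑ v, qW v * Qbar v := by
    simp only [mul_sub, Finset.sum_sub_distrib, ← Finset.sum_mul, hq₀sum, one_mul]
  have key : ∑ w, q₀ w * Qbar0 w
      = ∑ w, (q₀ w * (g₀ w / g w * (Qbar0 w - Qbar w) + Qbar w)
          + (1 / 2) * (2 * q₀ w ^ 2 * g₀ w / (g w * qW w) * (1 - g₀ w / g w) * (Qbar0 w - Qbar w))
          - q₀ w * (1 - g₀ w * q₀ w / (g w * qW w)) * (1 - g₀ w / g w) * (Qbar w - Qbar0 w)) := by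
    refine Finset.sum_congr rfl fun w _ => ?_
    field_simp
    ring
  rw [h1, h3, hsub, key, Finset.sum_sub_distrib, Finset.sum_add_distrib, ← Finset.mul_sum]
  ring
end

section
/- Second-order expansion with propensity-score matching for discrete covariates: define q̃₀(w) := ∑_{w' : g₀(w') = g₀(w)} q₀(w') and q̃_W(w) := ∑_{w' : g₀(w') = g₀(w)} q_W(w'). Define Ψ(Q) := ∑_w q_W(w)·Q̄(w), ψ₀ := ∑_w q₀(w)·Q̄₀(w), D⁽¹⁾(P)(w,a,y) := (a/g(w))·(y − Q̄(w)) + Q̄(w) − Ψ(Q), the propensity-matched second-order gradient D⁽²⁾(P)((w₁,a₁,y₁),(w₂,a₂,y₂)) := 2·a₁·𝟙{g₀(w₁) = g₀(w₂)}/(g(w₁)·q̃_W(w₁))·(1 − a₂/g(w₁))·(y₁ − Q̄(w₁)), and the remainder R₃(P,P₀) := ∑_w q₀(w)·(1 − g₀(w)q̃₀(w)/(g(w)q̃_W(w)))·(1 − g₀(w)/g(w))·(Q̄(w) − Q̄₀(w)). Then Ψ(Q) − ψ₀ = −E_{P₀}[D⁽¹⁾(P)(O)] − (1/2)·E_{P₀×P₀}[D⁽²⁾(P)(O₁,O₂)]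 + R₃(P,P₀). -/
open Finset

/-- **Second-order expansion with propensity-score matching for discrete covariates.**
`W` finite, observed data `O = (w,a,y) ∈ W × {0,1} × {0,1}` with law
`P₀(w,a,y) = q₀(w)·[a·g₀(w)·Qbar0(w)^y·(1−Qbar0(w))^{1−y} + (1−a)·(1−g₀(w))·𝟙{y=0}]`.
With `q̃₀(w) := ∑_{w' : g₀(w')=g₀(w)} q₀(w')`, `q̃W(w) := ∑_{w' : g₀(w')=g₀(w)} qW(w')`,
`Ψ := ∑_w qW(w)·Qbar(w)`, `ψ₀ := ∑_w q₀(w)·Qbar0(w)`,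
`D⁽¹⁾(w,a,y) := (a/g(w))·(y − Qbar(w)) + Qbar(w) − Ψ`, the propensity-matched
second-order gradient
`D⁽²⁾((w₁,a₁,y₁),(w₂,a₂,y₂)) := 2·a₁·𝟙{g₀(w₁)=g₀(w₂)}/(g(w₁)·q̃W(w₁))·(1 − a₂/g(w₁))·(y₁ − Qbar(w₁))`,
and `R₃ := ∑_w q₀(w)·(1 − g₀(w)q̃₀(w)/(g(w)q̃W(w)))·(1 − g₀(w)/g(w))·(Qbar(w) − Qbar0(w))`,
we have `Ψ − ψ₀ = −E_{P₀}[D⁽¹⁾] − (1/2)·E_{P₀×P₀}[D⁽²⁾] + R₃`. -/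
theorem second_order_expansion_propensity_matched
    {W : Type*} [Fintype W] [DecidableEq W]
    (q₀ qW g₀ g Qbar0 Qbar : W → ℝ)
    (hq₀pos : ∀ w, 0 < q₀ w) (hq₀sum : ∑ w, q₀ w = 1)
    (hqWpos : ∀ w, 0 < qW w) (hqWsum : ∑ w, qW w = 1)
    (hg₀0 : ∀ w, 0 ≤ g₀ w) (hg₀1 : ∀ w, g₀ w ≤ 1)
    (hQbar00 : ∀ w, 0 ≤ Qbar0 w) (hQbar01 : ∀ w, Qbar0 w ≤ 1)
    (hgpos : ∀ w, 0 < g w) (hg1 : ∀ w, g w ≤ 1)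
    (qt₀ qtW : W → ℝ)
    (hqt₀ : ∀ w, qt₀ w = ∑ w', if g₀ w' = g₀ w then q₀ w' else 0)
    (hqtW : ∀ w, qtW w = ∑ w', if g₀ w' = g₀ w then qW w' else 0)
    (p : W × Fin 2 × Fin 2 → ℝ)
    (hp : ∀ o : W × Fin 2 × Fin 2,
      p o = q₀ o.1 * (((o.2.1 : ℕ) : ℝ) * g₀ o.1 * Qbar0 o.1 ^ ((o.2.2 : ℕ))
              * (1 - Qbar0 o.1) ^ (1 - (o.2.2 : ℕ))
            + (1 - ((o.2.1 : ℕ) : ℝ)) * (1 - g₀ o.1)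
              * (if (o.2.2 : ℕ) = 0 then (1 : ℝ) else 0)))
    (D1 : W × Fin 2 × Fin 2 → ℝ)
    (hD1 : ∀ o : W × Fin 2 × Fin 2,
      D1 o = ((o.2.1 : ℕ) : ℝ) / g o.1 * (((o.2.2 : ℕ) : ℝ) - Qbar o.1)
          + Qbar o.1 - ∑ w, qW w * Qbar w)
    (D2 : (W × Fin 2 × Fin 2) → (W × Fin 2 × Fin 2) → ℝ)
    (hD2 : ∀ o₁ o₂ : W × Fin 2 × Fin 2,
      D2 o₁ o₂ = 2 * ((o₁.2.1 : ℕ) : ℝ)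
          * (if g₀ o₁.1 = g₀ o₂.1 then (1 : ℝ) else 0)
          / (g o₁.1 * qtW o₁.1) * (1 - ((o₂.2.1 : ℕ) : ℝ) / g o₁.1)
          * (((o₁.2.2 : ℕ) : ℝ) - Qbar o₁.1)) :
    (∑ w, qW w * Qbar w) - (∑ w, q₀ w * Qbar0 w) =
      -(∑ o : W × Fin 2 × Fin 2, p o * D1 o)
      - (1 / 2) * (∑ o₁ : W × Fin 2 × Fin 2, ∑ o₂ : W × Fin 2 × Fin 2,
          p o₁ * p o₂ * D2 o₁ o₂)
      + ∑ w, q₀ w * (1 - g₀ w * qt₀ w / (g w * qtW w)) * (1 - g₀ w / g w)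
          * (Qbar w - Qbar0 w) := by

  have hg' : ∀ w, g w ≠ 0 := fun w => (hgpos w).ne'
  have hqtW' : ∀ w, qtW w ≠ 0 := by
    intro w
    rw [hqtW]
    have : 0 < ∑ w', if g₀ w' = g₀ w then qW w' else 0 := by
      apply Finset.sum_pos'
      · intro i _
        split
        · exact (hqWpos i).le
        · exact le_rfl
      · exact ⟨w, Finset.mem_univ w, by simp [hqWpos w]⟩
    exact this.ne'
  set Ψ : ℝ := ∑ w, qW w * Qbar w with hΨ
  -- first-order term
  have h1 : ∑ o : W × Fin 2 × Fin 2, p o * D1 o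
      = ∑ w, q₀ w * (g₀ w * (Qbar0 w - Qbar w) / g w + Qbar w - Ψ) := by
    rw [Fintype.sum_prod_type]
    refine Finset.sum_congr rfl fun w _ => ?_
    rw [Fintype.sum_prod_type]
    simp only [hp, hD1, Fin.sum_univ_two, Fin.val_zero, Fin.val_one, Nat.cast_zero,
      Nat.cast_one, pow_zero, pow_one]
    norm_num
    field_simp
    ring
  -- inner sum for the second-order term
  have inner : ∀ (w₁ : W) (a₁ y₁ : Fin 2),
      ∑ o₂ : W × Fin 2 × Fin 2, p (w₁, a₁, y₁) * p o₂ * D2 (w₁, a₁, y₁) o₂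
      = ∑ w₂, p (w₁, a₁, y₁) * 2 * ((a₁ : ℕ) : ℝ) * (((y₁ : ℕ) : ℝ) - Qbar w₁)
          / (g w₁ * qtW w₁)
          * ((if g₀ w₂ = g₀ w₁ then q₀ w₂ else 0) * (1 - g₀ w₁ / g w₁)) := by
    intro w₁ a₁ y₁
    rw [Fintype.sum_prod_type]
    refine Finset.sum_congr rfl fun w₂ _ => ?_
    set P1 := p (w₁, a₁, y₁) with hP1
    rcases eq_or_ne (g₀ w₁) (g₀ w₂) with h | h
    · simp only [hp, hD2, Fintype.sum_prod_type, Fin.sum_univ_two, Fin.val_zero,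
        Fin.val_one, Nat.cast_zero, Nat.cast_one, pow_zero, pow_one, h, if_pos rfl]
      norm_num
      rw [← h]
      field_simp
      ring
    · simp only [hp, hD2, Fintype.sum_prod_type, Fin.sum_univ_two, Fin.val_zero,
        Fin.val_one, Nat.cast_zero, Nat.cast_one, pow_zero, pow_one, if_neg h,
        if_neg (Ne.symm h)]
      norm_num
  -- second-order term
  have h2 : (∑ o₁ : W × Fin 2 × Fin 2, ∑ o₂ : W × Fin 2 × Fin 2,
        p o₁ * p o₂ * D2 o₁ o₂)
      = ∑ w, 2 * q₀ w * (g₀ w * (Qbar0 w - Qbar w)) / (g w * qtW w)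
          * (qt₀ w * (1 - g₀ w / g w)) := by
    rw [Fintype.sum_prod_type]
    refine Finset.sum_congr rfl fun w₁ _ => ?_
    rw [Fintype.sum_prod_type]
    simp only [Fin.sum_univ_two, inner w₁]
    rw [hqt₀, Finset.sum_mul, Finset.mul_sum,
      ← Finset.sum_add_distrib, ← Finset.sum_add_distrib, ← Finset.sum_add_distrib]
    refine Finset.sum_congr rfl fun w₂ _ => ?_
    simp only [hp, Fin.val_zero, Fin.val_one, Nat.cast_zero, Nat.cast_one,
      pow_zero, pow_one]
    norm_num
    split_ifs with h
    · field_simp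
      ring
    · ring
  rw [h1, h2]
  have hstep : -( ∑ w, q₀ w * (g₀ w * (Qbar0 w - Qbar w) / g w + Qbar w - Ψ))
      - 1 / 2 * ∑ w, 2 * q₀ w * (g₀ w * (Qbar0 w - Qbar w)) / (g w * qtW w)
          * (qt₀ w * (1 - g₀ w / g w))
      + ∑ w, q₀ w * (1 - g₀ w * qt₀ w / (g w * qtW w)) * (1 - g₀ w / g w)
          * (Qbar w - Qbar0 w)
      = ∑ w, (q₀ w * Ψ - q₀ w * Qbar0 w) := by
    rw [Finset.mul_sum, ← Finset.sum_neg_distrib, ← Finset.sum_sub_distrib,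
      ← Finset.sum_add_distrib]
    refine Finset.sum_congr rfl fun w _ => ?_
    field_simp
    ring
  rw [hstep, Finset.sum_sub_distrib, ← Finset.sum_mul, hq₀sum, one_mul]
end

section
/- Identification of the mean outcome under missingness at random: suppose A and Y are conditionally independent given σ(W), g₀∘W is a version of the conditional expectation E[A | σ(W)], b∘W is a version of E[A·Y | σ(W)], and g₀(W) > 0 almost surely. Then E[b(W)/g₀(W)] = E[Y]; equivalently, letting Q̄₀ := b/g₀ (the outcome regression E[Y | A=1, W]), the parameter ψ₀ := E[Q̄₀(W)] equals the full-data mean E[Y]. -/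
open MeasureTheory ProbabilityTheory Set

/-- **Identification of the mean outcome under missingness at random.**
On a probability space carrying covariates `W`, a missingness indicator
`A ∈ {0,1}`, and an integrable outcome `Y`: if `A` and `Y` are conditionally
independent given `σ(W)`, `g₀ ∘ W` is a version of `E[A | σ(W)]`,
`b ∘ W` is a version of `E[A·Y | σ(W)]`, and `g₀(W) > 0` a.s., then
`E[b(W)/g₀(W)] = E[Y]` (i.e., with `Qbar0 := b/g₀` the outcome regression,
`ψ₀ := E[Qbar0(W)]` equals the full-data mean `E[Y]`). -/
theorem identification_mean_outcome_MAR
    {Ω 𝒲 : Type*} [mΩ : MeasurableSpace Ω] [StandardBorelSpace Ω]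
    [MeasurableSpace 𝒲]
    (μ : Measure Ω) [IsProbabilityMeasure μ]
    (W : Ω → 𝒲) (A Y : Ω → ℝ) (g₀ b : 𝒲 → ℝ)
    (hWmeas : Measurable W) (hAmeas : Measurable A)
    (hg₀meas : Measurable g₀) (hbmeas : Measurable b)
    (hA01 : ∀ ω, A ω = 0 ∨ A ω = 1)
    (hYint : Integrable Y μ)
    (hmW : MeasurableSpace.comap W ‹MeasurableSpace 𝒲› ≤ mΩ)
    (hCI : CondIndepFun (MeasurableSpace.comap W ‹MeasurableSpace 𝒲›) hmW A Y μ)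
    (hg₀ : μ[A | MeasurableSpace.comap W ‹MeasurableSpace 𝒲›]
        =ᵐ[μ] fun ω => g₀ (W ω))
    (hb : μ[fun ω => A ω * Y ω | MeasurableSpace.comap W ‹MeasurableSpace 𝒲›]
        =ᵐ[μ] fun ω => b (W ω))
    (hpos : ∀ᵐ ω ∂μ, 0 < g₀ (W ω))
    (hint1 : Integrable (fun ω => A ω * Y ω / g₀ (W ω)) μ)
    (hint2 : Integrable (fun ω => b (W ω) / g₀ (W ω)) μ) :
    ∫ ω, b (W ω) / g₀ (W ω) ∂μ = ∫ ω, Y ω ∂μ := by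
  set κ : @Kernel Ω Ω (MeasurableSpace.comap W ‹MeasurableSpace 𝒲›) mΩ := condExpKernel μ (MeasurableSpace.comap W ‹MeasurableSpace 𝒲›) with hκdef
  -- basic integrability
  have hAbd : ∀ ω, ‖A ω‖ ≤ 1 := by
    intro ω; rcases hA01 ω with h | h <;> simp [h]
  have hAint : Integrable A μ :=
    (integrable_const (1 : ℝ)).mono' hAmeas.aestronglyMeasurable
      (Filter.Eventually.of_forall hAbd)
  have hAYint : Integrable (fun ω => A ω * Y ω) μ :=
    hYint.bdd_mul hAmeas.aestronglyMeasurable (Filter.Eventually.of_forall hAbd)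
  -- measurable version of Y
  set Y' := hYint.1.mk Y with hY'def
  have hY'sm : StronglyMeasurable Y' := hYint.1.stronglyMeasurable_mk
  have hY'meas : Measurable Y' := hY'sm.measurable
  have hYY' : Y =ᵐ[μ] Y' := hYint.1.ae_eq_mk
  set N := toMeasurable μ {ω | Y ω ≠ Y' ω} with hNdef
  have hNmeas : MeasurableSet N := measurableSet_toMeasurable _ _
  have hNnull : μ N = 0 := by
    rw [measure_toMeasurable]
    exact hYY'
  have hsubN : {ω | Y ω ≠ Y' ω} ⊆ N := subset_toMeasurable _ _
  set S := A ⁻¹' {1} with hSdef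
  have hSmeas : MeasurableSet S := hAmeas (measurableSet_singleton 1)
  -- κ ω N = 0 a.e.
  have hκN : ∀ᵐ ω ∂μ, κ ω N = 0 := by
    have h1 : (fun ω => (κ ω N).toReal) =ᵐ[μ] μ⟦N | (MeasurableSpace.comap W ‹MeasurableSpace 𝒲›)⟧ :=
      condExpKernel_ae_eq_condExp hmW hNmeas
    have h2 : μ⟦N | (MeasurableSpace.comap W ‹MeasurableSpace 𝒲›)⟧ =ᵐ[μ] 0 := by
      have hz : N.indicator (fun _ => (1:ℝ)) =ᵐ[μ] 0 := by
        have : ∀ᵐ ω ∂μ, ω ∉ N := by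
          rw [ae_iff]; simpa using hNnull
        filter_upwards [this] with ω hω
        simp [Set.indicator_of_notMem hω]
      calc μ⟦N | (MeasurableSpace.comap W ‹MeasurableSpace 𝒲›)⟧ =ᵐ[μ] μ[(0 : Ω → ℝ) | (MeasurableSpace.comap W ‹MeasurableSpace 𝒲›)] := condExp_congr_ae hz
        _ = 0 := condExp_zero
    filter_upwards [h1, h2] with ω h1 h2
    have : (κ ω N).toReal = 0 := by rw [h1, h2]; rfl
    have hne : κ ω N ≠ ⊤ := measure_ne_top _ _
    exact (ENNReal.toReal_eq_zero_iff _).mp this |>.resolve_right hne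
  -- conditional independence: product rule on Iic q
  have hInd : ∀ q : ℚ, ∀ᵐ ω ∂μ,
      κ ω (S ∩ Y ⁻¹' Iic (q : ℝ)) = κ ω S * κ ω (Y ⁻¹' Iic (q : ℝ)) := by
    intro q
    have := (Kernel.indepFun_iff_measure_inter_preimage_eq_mul.mp hCI)
      {1} (Iic (q : ℝ)) (measurableSet_singleton 1) measurableSet_Iic
    exact ae_of_ae_trim hmW this
  have hIndAll : ∀ᵐ ω ∂μ, ∀ q : ℚ,
      κ ω (S ∩ Y ⁻¹' Iic (q : ℝ)) = κ ω S * κ ω (Y ⁻¹' Iic (q : ℝ)) :=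
    ae_all_iff.mpr hInd
  have hYκ : ∀ᵐ ω ∂μ, Integrable Y (κ ω) := hYint.condExpKernel_ae
  -- pointwise factorization of the kernel integral
  have hfac : ∀ᵐ ω ∂μ,
      ∫ y, A y * Y y ∂(κ ω) = (∫ y, A y ∂(κ ω)) * ∫ y, Y y ∂(κ ω) := by
    filter_upwards [hκN, hIndAll, hYκ] with ω hκN hInd hYκ
    have hNae : ∀ᵐ x ∂(κ ω), x ∉ N := by
      rw [ae_iff]; simpa using hκN
    have hYY'κ : Y =ᵐ[κ ω] Y' := by
      filter_upwards [hNae] with x hx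
      by_contra h
      exact hx (hsubN h)
    -- the two pushforward measures agree
    have hmapae : ∀ u : Set ℝ, κ ω (S ∩ Y ⁻¹' u) = κ ω (S ∩ Y' ⁻¹' u) := by
      intro u
      refine measure_congr ?_
      filter_upwards [hYY'κ] with x hx
      simp only [eq_iff_iff]
      show x ∈ S ∩ Y ⁻¹' u ↔ x ∈ S ∩ Y' ⁻¹' u
      simp [hx]
    have hmapae2 : ∀ u : Set ℝ, κ ω (Y ⁻¹' u) = κ ω (Y' ⁻¹' u) := by
      intro u
      refine measure_congr ?_
      filter_upwards [hYY'κ] with x hx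
      simp only [eq_iff_iff]
      show x ∈ Y ⁻¹' u ↔ x ∈ Y' ⁻¹' u
      simp [hx]
    set ν₁ : Measure ℝ := Measure.map Y' ((κ ω).restrict S) with hν₁
    set ν₂ : Measure ℝ := (κ ω S) • Measure.map Y' (κ ω) with hν₂
    have hfin1 : IsFiniteMeasure ν₁ := by
      constructor
      rw [hν₁, Measure.map_apply hY'meas MeasurableSet.univ]
      exact lt_of_le_of_lt (measure_mono (Set.subset_univ _)) (measure_lt_top _ _)
    have hfin2 : IsFiniteMeasure ν₂ := by
      constructor
      rw [hν₂, Measure.smul_apply, Measure.map_apply hY'meas MeasurableSet.univ]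
      exact ENNReal.mul_lt_top (measure_lt_top _ _) (measure_lt_top _ _)
    have hνeq : ν₁ = ν₂ := by
      refine ext_of_generate_finite _
        (BorelSpace.measurable_eq.trans Real.borel_eq_generateFrom_Iic_rat)
        Real.isPiSystem_Iic_rat ?_ ?_
      · rintro s hs
        simp only [Set.mem_iUnion, Set.mem_singleton_iff] at hs
        obtain ⟨q, rfl⟩ := hs
        rw [hν₁, hν₂, Measure.map_apply hY'meas measurableSet_Iic,
          Measure.smul_apply, Measure.map_apply hY'meas measurableSet_Iic,
          Measure.restrict_apply (hY'meas measurableSet_Iic)]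
        rw [Set.inter_comm, ← hmapae, hInd q, hmapae2]
        rfl
      · rw [hν₁, hν₂, Measure.map_apply hY'meas MeasurableSet.univ,
          Measure.smul_apply, Measure.map_apply hY'meas MeasurableSet.univ]
        simp [Measure.restrict_apply, Set.univ_inter, measure_univ]
    -- compute the integrals
    have hAY_ind : (fun y => A y * Y y) = S.indicator Y := by
      funext y
      rcases hA01 y with h | h
      · have : y ∉ S := by simp [hSdef, h]
        simp [Set.indicator_of_notMem this, h]
      · have : y ∈ S := by simp [hSdef, h]
        simp [Set.indicator_of_mem this, h]
    have hA_ind : A = S.indicator (fun _ => (1:ℝ)) := by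
      funext y
      rcases hA01 y with h | h
      · have : y ∉ S := by simp [hSdef, h]
        simp [Set.indicator_of_notMem this, h]
      · have : y ∈ S := by simp [hSdef, h]
        simp [Set.indicator_of_mem this, h]
    have e1 : ∫ y, A y * Y y ∂(κ ω) = ∫ y in S, Y' y ∂(κ ω) := by
      rw [hAY_ind]
      rw [integral_indicator hSmeas]
      exact setIntegral_congr_ae hSmeas (by filter_upwards [hYY'κ] with x hx _ using hx)
    have e2 : ∫ y in S, Y' y ∂(κ ω) = ∫ z, z ∂ν₁ := by
      rw [hν₁]
      exact (integral_map hY'meas.aemeasurable measurable_id.aestronglyMeasurable).symm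
    have e3 : ∫ z, z ∂ν₂ = (κ ω S).toReal * ∫ y, Y y ∂(κ ω) := by
      have hm3 : ∫ z, z ∂(Measure.map Y' (κ ω)) = ∫ y, Y' y ∂(κ ω) :=
        integral_map hY'meas.aemeasurable measurable_id.aestronglyMeasurable
      rw [hν₂, integral_smul_measure, hm3, ← integral_congr_ae hYY'κ, smul_eq_mul]
    have e4 : ∫ y, A y ∂(κ ω) = (κ ω S).toReal := by
      rw [hA_ind]
      exact integral_indicator_one (μ := κ ω) hSmeas
    rw [e1, e2, hνeq, e3, e4]
  -- identify b(W)/g₀(W) with E[Y | σ(W)]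
  have hbW : (fun ω => b (W ω)) =ᵐ[μ] fun ω => ∫ y, A y * Y y ∂(κ ω) :=
    hb.symm.trans (condExp_ae_eq_integral_condExpKernel hmW hAYint)
  have hgW : (fun ω => g₀ (W ω)) =ᵐ[μ] fun ω => ∫ y, A y ∂(κ ω) :=
    hg₀.symm.trans (condExp_ae_eq_integral_condExpKernel hmW hAint)
  have hYW : μ[Y | (MeasurableSpace.comap W ‹MeasurableSpace 𝒲›)] =ᵐ[μ] fun ω => ∫ y, Y y ∂(κ ω) :=
    condExp_ae_eq_integral_condExpKernel hmW hYint
  have hkey : (fun ω => b (W ω) / g₀ (W ω)) =ᵐ[μ] μ[Y | (MeasurableSpace.comap W ‹MeasurableSpace 𝒲›)] := by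
    filter_upwards [hbW, hgW, hYW, hfac, hpos] with ω h1 h2 h3 h4 h5
    rw [h1, h2, h3, h4, ← h2, mul_comm]
    exact mul_div_cancel_right₀ _ (ne_of_gt h5)
  rw [integral_congr_ae hkey, integral_condExp hmW]
end

section
/- The 2-TMLE solves the empirical second-order equation: given data (Wᵢ, Aᵢ, Yᵢ) ∈ ℝ^d × {0,1} × ℝ, i = 1, …, n, a kernel value function K_h : ℝ^d → ℝ, define q̂(w) := (1/n)∑ⱼ K_h(w − Wⱼ), ĝ_h(w) := ∑ⱼ K_h(w − Wⱼ)Aⱼ / ∑ⱼ K_h(w − Wⱼ), the auxiliary covariate Ĥ⁽²⁾(w) := (1/ĝ(w))·(1 − ĝ_h(w)/ĝ(w)), and D⁽²⁾_h((w₁,a₁,y₁),(w₂,a₂,y₂)) := 2·a₁·K_h(w₁ − w₂)/(ĝ(w₁)·q̂(w₁))·(1 − a₂/ĝ(w₁))·(y₁ − Q̄*(w₁)). If q̂(Wᵢ) ≠ 0 for all i, then (1/n²)∑ᵢ∑ⱼ D⁽²⁾_h((Wᵢ,Aᵢ,Yᵢ),(Wⱼ,Aⱼ,Yⱼ)) =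 (2/n)∑ᵢ Aᵢ·Ĥ⁽²⁾(Wᵢ)·(Yᵢ − Q̄*(Wᵢ)). In particular, if the second targeting score equation ∑ᵢ Aᵢ·Ĥ⁽²⁾(Wᵢ)·(Yᵢ − Q̄*(Wᵢ)) = 0 holds, then the empirical second-order equation (1/n²)∑ᵢ∑ⱼ D⁽²⁾_h((Wᵢ,Aᵢ,Yᵢ),(Wⱼ,Aⱼ,Yⱼ)) = 0 holds. -/
open Finset

/-- **The 2-TMLE solves the empirical second-order equation.**
Given data `(Wᵢ, Aᵢ, Yᵢ) ∈ ℝ^d × {0,1} × ℝ` and a kernel `K_h`, define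
`q̂(w) := (1/n)∑ⱼ K_h(w − Wⱼ)`,
`ĝ_h(w) := ∑ⱼ K_h(w − Wⱼ)Aⱼ / ∑ⱼ K_h(w − Wⱼ)`,
`Ĥ⁽²⁾(w) := (1/ĝ(w))·(1 − ĝ_h(w)/ĝ(w))`, and
`D⁽²⁾_h((w₁,a₁,y₁),(w₂,a₂,y₂)) := 2a₁·K_h(w₁−w₂)/(ĝ(w₁)q̂(w₁))·(1 − a₂/ĝ(w₁))·(y₁ − Qstar(w₁))`.
If `q̂(Wᵢ) ≠ 0` for all `i`, then
`(1/n²)∑ᵢ∑ⱼ D⁽²⁾_h((Wᵢ,Aᵢ,Yᵢ),(Wⱼ,Aⱼ,Yⱼ)) = (2/n)∑ᵢ AᵢĤ⁽²⁾(Wᵢ)(Yᵢ − Qstar(Wᵢ))`;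
in particular, if `∑ᵢ AᵢĤ⁽²⁾(Wᵢ)(Yᵢ − Qstar(Wᵢ)) = 0`, the empirical
second-order equation `(1/n²)∑ᵢ∑ⱼ D⁽²⁾_h(...) = 0` holds. -/
theorem tmle2_solves_second_order_equation
    {d : ℕ} (ghat Qstar Kh : (Fin d → ℝ) → ℝ)
    (hghat : ∀ w, ghat w ≠ 0)
    (n : ℕ) (hn : 0 < n)
    (W : Fin n → (Fin d → ℝ)) (A Y : Fin n → ℝ)
    (hA01 : ∀ i, A i = 0 ∨ A i = 1)
    (qhat : (Fin d → ℝ) → ℝ)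
    (hqhat : ∀ w, qhat w = (1 / (n : ℝ)) * ∑ j, Kh (w - W j))
    (ghat_h : (Fin d → ℝ) → ℝ)
    (hghat_h : ∀ w, ghat_h w = (∑ j, Kh (w - W j) * A j) / (∑ j, Kh (w - W j)))
    (H2 : (Fin d → ℝ) → ℝ)
    (hH2 : ∀ w, H2 w = (1 / ghat w) * (1 - ghat_h w / ghat w))
    (D2 : ((Fin d → ℝ) × ℝ × ℝ) → ((Fin d → ℝ) × ℝ × ℝ) → ℝ)
    (hD2 : ∀ o₁ o₂ : (Fin d → ℝ) × ℝ × ℝ,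
      D2 o₁ o₂ = 2 * o₁.2.1 * Kh (o₁.1 - o₂.1) / (ghat o₁.1 * qhat o₁.1)
          * (1 - o₂.2.1 / ghat o₁.1) * (o₁.2.2 - Qstar o₁.1))
    (hqhat_ne : ∀ i, qhat (W i) ≠ 0) :
    ((1 / (n : ℝ) ^ 2) * ∑ i, ∑ j, D2 (W i, A i, Y i) (W j, A j, Y j) =
      (2 / (n : ℝ)) * ∑ i, A i * H2 (W i) * (Y i - Qstar (W i))) ∧
    ((∑ i, A i * H2 (W i) * (Y i - Qstar (W i)) = 0) →
      (1 / (n : ℝ) ^ 2) * ∑ i, ∑ j, D2 (W i, A i, Y i) (W j, A j, Y j) = 0) := by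
  have hn' : (n:ℝ) ≠ 0 := Nat.cast_ne_zero.mpr hn.ne'
  have key : ∀ i, ∑ j, D2 (W i, A i, Y i) (W j, A j, Y j)
      = (n:ℝ) * (2 * A i * H2 (W i) * (Y i - Qstar (W i))) := by
    intro i
    have hS : (∑ j, Kh (W i - W j)) = (n:ℝ) * qhat (W i) := by
      rw [hqhat]; field_simp
    have hSne : (∑ j, Kh (W i - W j)) ≠ 0 := by
      rw [hS]; exact mul_ne_zero hn' (hqhat_ne i)
    have hT : (∑ j, Kh (W i - W j) * A j) = ghat_h (W i) * ∑ j, Kh (W i - W j) := by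
      rw [hghat_h]; field_simp
    calc ∑ j, D2 (W i, A i, Y i) (W j, A j, Y j)
        = ∑ j, ((2 * A i * (Y i - Qstar (W i)) / (ghat (W i) * qhat (W i))) * Kh (W i - W j)
            - (2 * A i * (Y i - Qstar (W i)) / (ghat (W i) * qhat (W i) * ghat (W i)))
              * (Kh (W i - W j) * A j)) := by
          refine Finset.sum_congr rfl fun j _ => ?_
          rw [hD2]
          have h1 := hghat (W i)
          have h2 := hqhat_ne i
          field_simp
      _ = (2 * A i * (Y i - Qstar (W i)) / (ghat (W i) * qhat (W i))) * (∑ j, Kh (W i - W j))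
            - (2 * A i * (Y i - Qstar (W i)) / (ghat (W i) * qhat (W i) * ghat (W i)))
              * (∑ j, Kh (W i - W j) * A j) := by
          rw [Finset.sum_sub_distrib, Finset.mul_sum, Finset.mul_sum]
      _ = (n:ℝ) * (2 * A i * H2 (W i) * (Y i - Qstar (W i))) := by
          rw [hT, hS, hH2]
          have h1 := hghat (W i)
          have h2 := hqhat_ne i
          field_simp
  have main : (1 / (n : ℝ) ^ 2) * ∑ i, ∑ j, D2 (W i, A i, Y i) (W j, A j, Y j) =
      (2 / (n : ℝ)) * ∑ i, A i * H2 (W i) * (Y i - Qstar (W i)) := by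
    rw [Finset.sum_congr rfl fun i _ => key i, ← Finset.mul_sum]
    rw [show ∀ x : ℝ, (1 / (n:ℝ)^2) * ((n:ℝ) * x) = (1/(n:ℝ)) * x from fun x => by
      field_simp]
    rw [Finset.mul_sum, Finset.mul_sum]
    refine Finset.sum_congr rfl fun i _ => ?_
    field_simp
  exact ⟨main, fun h => by rw [main, h, mul_zero]⟩
end

section
/- Deterministic representation-error bound for the kernel-smoothed second-order term (univariate covariate): define A_h := 2∫ [∫ (1/h)·K((w₁ − w₂)/h)·(1 − g₀(w₂)/g(w₁))·q₀(w₂) dw₂]·g₀(w₁)·(Q̄₀(w₁) − Q̄(w₁))·q₀(w₁)/(g(w₁)·q_W(w₁)) dw₁ and A₀ := 2∫ q₀(w)·(1 − g₀(w)/g(w))·g₀(w)·(Q̄₀(w) − Q̄(w))·q₀(w)/(g(w)·q_W(w)) dw. Then there exists a constant C, depending only on δ, m₀, K, and the suprema of the derivatives of q₀ and g₀·q₀ up to order m₀+1, such that for all h > 0, |A_h − A₀| ≤ C·h^{m₀+1}·‖Q̄ − Q̄₀‖_{L²(q₀)}, where ‖f‖_{L²(q₀)}² := ∫ f(w)²·q₀(w)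 dw. -/
open MeasureTheory


private lemma abs_sub_le_of_mem_uIcc {x y t : ℝ} (ht : t ∈ Set.uIcc x y) :
    |t - x| ≤ |y - x| := by
  rcases Set.mem_uIcc.1 ht with ⟨h1, h2⟩ | ⟨h1, h2⟩ <;> rw [abs_sub_le_iff] <;>
    constructor <;> cases abs_cases (y - x) <;> linarith

private lemma taylor_bound (n : ℕ) (F : ℝ → ℝ) (B : ℝ)
    (hF : ContDiff ℝ (n + 1 : ℕ) F)
    (hB : ∀ k ≤ n + 1, ∀ t, |iteratedDeriv k F t| ≤ B) (x y : ℝ) :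
    |F y - ∑ j ∈ Finset.range (n + 1), iteratedDeriv j F x * (y - x) ^ j / j.factorial|
      ≤ B * |y - x| ^ (n + 1) := by
  induction n generalizing F B x y with
  | zero =>
    have hsum : ∑ j ∈ Finset.range (0 + 1), iteratedDeriv j F x * (y - x) ^ j / j.factorial
        = F x := by simp
    rw [hsum, pow_one]
    have hdiff : Differentiable ℝ F := hF.differentiable (by norm_num)
    have := Convex.norm_image_sub_le_of_norm_hasDerivWithin_le
      (f := F) (f' := deriv F) (s := Set.univ) (x := x) (y := y)
      (fun t _ => (hdiff t).hasDerivAt.hasDerivWithinAt)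
      (fun t _ => by
        have := hB 1 le_rfl t
        rwa [iteratedDeriv_one] at this)
      convex_univ trivial trivial
    simpa [Real.norm_eq_abs] using this
  | succ n IH =>
    have hB0 : 0 ≤ B := le_trans (abs_nonneg _) (hB 0 (by omega) x)
    have hd : Differentiable ℝ F := hF.differentiable (by norm_num)
    have hF2 : ContDiff ℝ ((n + 1 : ℕ) + 1) F := by exact_mod_cast hF
    have hF' : ContDiff ℝ (n + 1 : ℕ) (deriv F) := (contDiff_succ_iff_deriv.mp hF2).2.2
    have hB' : ∀ k ≤ n + 1, ∀ t, |iteratedDeriv k (deriv F) t| ≤ B := by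
      intro k hk t
      rw [← iteratedDeriv_succ']
      exact hB (k + 1) (by omega) t
    set c : ℕ → ℝ := fun j => iteratedDeriv j F x with hc
    have hder : ∀ z, HasDerivAt
        (fun z => ∑ j ∈ Finset.range (n + 2), c j * (z - x) ^ j / j.factorial)
        (∑ j ∈ Finset.range (n + 1),
          iteratedDeriv j (deriv F) x * (z - x) ^ j / j.factorial) z := by
      intro z
      have h1 : HasDerivAt
          (fun z => ∑ j ∈ Finset.range (n + 2), c j * (z - x) ^ j / j.factorial)
          (∑ j ∈ Finset.range (n + 2),
            c j * ((j : ℝ) * (z - x) ^ (j - 1) * 1) / j.factorial) z := by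
        apply HasDerivAt.fun_sum
        intro j hj
        exact ((((hasDerivAt_id z).sub_const x).pow j).const_mul (c j)).div_const _
      convert h1 using 1
      symm
      rw [Finset.sum_range_succ']
      have h0 : c 0 * ((0 : ℕ) * (z - x) ^ (0 - 1) * 1) / (Nat.factorial 0 : ℕ) = 0 := by simp
      rw [h0, add_zero]
      symm
      apply Finset.sum_congr rfl
      intro j _
      have hjd : iteratedDeriv j (deriv F) x = c (j + 1) := by
        rw [hc, ← iteratedDeriv_succ']
      rw [hjd, Nat.factorial_succ]
      have hfne : (j.factorial : ℝ) ≠ 0 := by exact_mod_cast j.factorial_ne_zero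
      have hjne : ((j : ℝ) + 1) ≠ 0 := by positivity
      push_cast
      field_simp
    set Cb := B * |y - x| ^ (n + 1) with hCb
    have hR : ∀ t ∈ Set.uIcc x y, HasDerivWithinAt
        (fun z => F z - ∑ j ∈ Finset.range (n + 2), c j * (z - x) ^ j / j.factorial)
        (deriv F t - ∑ j ∈ Finset.range (n + 1),
          iteratedDeriv j (deriv F) x * (t - x) ^ j / j.factorial) (Set.uIcc x y) t :=
      fun t _ => (((hd t).hasDerivAt).sub (hder t)).hasDerivWithinAt
    have hbound : ∀ t ∈ Set.uIcc x y,
        ‖deriv F t - ∑ j ∈ Finset.range (n + 1),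
          iteratedDeriv j (deriv F) x * (t - x) ^ j / j.factorial‖ ≤ Cb := by
      intro t ht
      have h2 := IH (deriv F) B hF' hB' x t
      rw [Real.norm_eq_abs]
      refine h2.trans ?_
      exact mul_le_mul_of_nonneg_left
        (pow_le_pow_left₀ (abs_nonneg _) (abs_sub_le_of_mem_uIcc ht) _) hB0
    have hmvt := Convex.norm_image_sub_le_of_norm_hasDerivWithin_le hR hbound
      (convex_uIcc x y) Set.left_mem_uIcc Set.right_mem_uIcc
    have hRx : F x - ∑ j ∈ Finset.range (n + 2), c j * (x - x) ^ j / j.factorial = 0 := by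
      have hs : ∑ j ∈ Finset.range (n + 2), c j * (x - x) ^ j / j.factorial = c 0 := by
        rw [Finset.sum_eq_single 0]
        · simp
        · intro j _ hj
          simp [sub_self, zero_pow hj]
        · intro hmem
          simp at hmem
      rw [hs, hc]
      simp
    rw [hRx, sub_zero, Real.norm_eq_abs, Real.norm_eq_abs] at hmvt
    calc |F y - ∑ j ∈ Finset.range (n + 1 + 1), iteratedDeriv j F x * (y - x) ^ j / j.factorial|
        ≤ Cb * |y - x| := hmvt
      _ = B * |y - x| ^ (n + 1 + 1) := by rw [hCb, pow_succ]; ring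

private lemma conv_bound (n : ℕ) (K F : ℝ → ℝ) (B : ℝ)
    (hK : Integrable K) (hKunit : ∫ u, K u = 1)
    (hKorth : ∀ j : ℕ, 1 ≤ j → j ≤ n → ∫ u, u ^ j * K u = 0)
    (hKmom : Integrable (fun u => |u| ^ (n + 1) * |K u|))
    (hF : ContDiff ℝ (n + 1 : ℕ) F)
    (hB : ∀ k ≤ n + 1, ∀ t, |iteratedDeriv k F t| ≤ B)
    (x h : ℝ) (hh : 0 < h) :
    |(∫ u, K u * F (x - h * u)) - F x|
      ≤ (B * ∫ u, |u| ^ (n + 1) * |K u|) * h ^ (n + 1) := by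
  have hB0 : 0 ≤ B := le_trans (abs_nonneg _) (by simpa using hB 0 (by omega) x)
  have hFb : ∀ t, |F t| ≤ B := by intro t; simpa using hB 0 (by omega) t
  have hcont : Continuous F := hF.continuous
  set S : ℝ → ℝ := fun u =>
    ∑ j ∈ Finset.range (n + 1), iteratedDeriv j F x * ((x - h * u) - x) ^ j / j.factorial
    with hS
  set c : ℕ → ℝ := fun j => iteratedDeriv j F x * (-h) ^ j / j.factorial with hcdef
  -- integrability of moment functions
  have intKj : ∀ j, j ≤ n → Integrable (fun u => u ^ j * K u) := by
    intro j hj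
    refine Integrable.mono' (hK.abs.add hKmom)
      (((continuous_pow j).aestronglyMeasurable).mul hK.aestronglyMeasurable) ?_
    filter_upwards with u
    rw [Real.norm_eq_abs, abs_mul, abs_pow]
    simp only [Pi.add_apply]
    rcases le_or_gt |u| 1 with h1 | h1
    · have h2 : |u| ^ j ≤ 1 := pow_le_one₀ (abs_nonneg u) h1
      have h3 := mul_le_mul_of_nonneg_right h2 (abs_nonneg (K u))
      have h4 := mul_nonneg (pow_nonneg (abs_nonneg u) (n + 1)) (abs_nonneg (K u))
      linarith
    · have h2 : |u| ^ j ≤ |u| ^ (n + 1) := pow_le_pow_right₀ h1.le (by omega)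
      have h3 := mul_le_mul_of_nonneg_right h2 (abs_nonneg (K u))
      have h4 := abs_nonneg (K u)
      linarith
  have haff : Continuous (fun u : ℝ => x - h * u) :=
    continuous_const.sub (continuous_const.mul continuous_id)
  have intA : Integrable (fun u => K u * F (x - h * u)) := by
    refine Integrable.mono' (hK.abs.const_mul B)
      (hK.aestronglyMeasurable.mul ((hcont.comp haff).aestronglyMeasurable)) ?_
    filter_upwards with u
    rw [Real.norm_eq_abs, abs_mul]
    exact le_trans (mul_le_mul_of_nonneg_left (hFb _) (abs_nonneg _)) (by ring_nf; rfl)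
  have key : ∀ u, K u * F (x - h * u)
      = (∑ j ∈ Finset.range (n + 1), c j * (u ^ j * K u))
        + K u * (F (x - h * u) - S u) := by
    intro u
    have hx : (x - h * u) - x = (-h) * u := by ring
    have hmul : K u * S u = ∑ j ∈ Finset.range (n + 1), c j * (u ^ j * K u) := by
      rw [hS]
      simp only [hx]
      rw [Finset.mul_sum]
      refine Finset.sum_congr rfl fun j _ => ?_
      rw [hcdef, mul_pow]
      ring
    rw [mul_sub, hmul]
    ring
  have intSum : Integrable (fun u => ∑ j ∈ Finset.range (n + 1), c j * (u ^ j * K u)) := by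
    apply integrable_finset_sum
    intro j hj
    exact (intKj j (by simpa using Nat.lt_succ_iff.mp (Finset.mem_range.mp hj))).const_mul _
  have intR : Integrable (fun u => K u * (F (x - h * u) - S u)) := by
    have heq : (fun u => K u * (F (x - h * u) - S u))
        = fun u => K u * F (x - h * u)
          - ∑ j ∈ Finset.range (n + 1), c j * (u ^ j * K u) := by
      funext u
      linarith [key u]
    rw [heq]
    exact intA.sub intSum
  have hsplit : ∫ u, K u * F (x - h * u)
      = (∑ j ∈ Finset.range (n + 1), c j * ∫ u, u ^ j * K u)
        + ∫ u, K u * (F (x - h * u) - S u) := by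
    calc ∫ u, K u * F (x - h * u)
        = ∫ u, ((∑ j ∈ Finset.range (n + 1), c j * (u ^ j * K u))
            + K u * (F (x - h * u) - S u)) := by simp only [key]
      _ = (∫ u, ∑ j ∈ Finset.range (n + 1), c j * (u ^ j * K u))
            + ∫ u, K u * (F (x - h * u) - S u) := integral_add intSum intR
      _ = (∑ j ∈ Finset.range (n + 1), c j * ∫ u, u ^ j * K u)
            + ∫ u, K u * (F (x - h * u) - S u) := by
          have hint : ∀ j ∈ Finset.range (n + 1),
              Integrable (fun u : ℝ => c j * (u ^ j * K u)) := fun j hj =>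
            (intKj j (by simpa using Nat.lt_succ_iff.mp (Finset.mem_range.mp hj))).const_mul _
          rw [integral_finset_sum (Finset.range (n + 1))
            (f := fun j (u : ℝ) => c j * (u ^ j * K u)) hint]
          congr 1
          exact Finset.sum_congr rfl fun j _ => integral_const_mul _ _
  have hsum : (∑ j ∈ Finset.range (n + 1), c j * ∫ u, u ^ j * K u) = F x := by
    rw [Finset.sum_eq_single 0]
    · have : ∫ u, u ^ 0 * K u = 1 := by simpa using hKunit
      rw [this, hcdef]
      simp
    · intro j hj hj0
      rw [hKorth j (Nat.one_le_iff_ne_zero.mpr hj0)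
        (by simpa using Nat.lt_succ_iff.mp (Finset.mem_range.mp hj)), mul_zero]
    · intro hmem
      simp at hmem
  have hRb : |∫ u, K u * (F (x - h * u) - S u)|
      ≤ (B * ∫ u, |u| ^ (n + 1) * |K u|) * h ^ (n + 1) := by
    have hpt : ∀ u, |K u * (F (x - h * u) - S u)|
        ≤ (B * h ^ (n + 1)) * (|u| ^ (n + 1) * |K u|) := by
      intro u
      rw [abs_mul]
      have htay := taylor_bound n F B hF hB x (x - h * u)
      rw [show (∑ j ∈ Finset.range (n + 1),
        iteratedDeriv j F x * ((x - h * u) - x) ^ j / j.factorial) = S u from rfl] at htay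
      have habs : |(x - h * u) - x| = h * |u| := by
        rw [show (x - h * u) - x = -(h * u) by ring, abs_neg, abs_mul, abs_of_pos hh]
      rw [habs, mul_pow] at htay
      calc |K u| * |F (x - h * u) - S u| ≤ |K u| * (B * (h ^ (n + 1) * |u| ^ (n + 1))) :=
            mul_le_mul_of_nonneg_left htay (abs_nonneg _)
        _ = (B * h ^ (n + 1)) * (|u| ^ (n + 1) * |K u|) := by ring
    calc |∫ u, K u * (F (x - h * u) - S u)| ≤ ∫ u, |K u * (F (x - h * u) - S u)| := by
          simpa [Real.norm_eq_abs, abs_mul] using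
            norm_integral_le_integral_norm (μ := volume) (fun u => K u * (F (x - h * u) - S u))
      _ = ∫ u, |K u| * |F (x - h * u) - S u| := by
          simp only [abs_mul]
      _ ≤ ∫ u, (B * h ^ (n + 1)) * (|u| ^ (n + 1) * |K u|) := by
          refine integral_mono ?_ (hKmom.const_mul _) (fun u => by
            have := hpt u; rwa [abs_mul] at this)
          simpa [abs_mul] using intR.abs
      _ = (B * h ^ (n + 1)) * ∫ u, |u| ^ (n + 1) * |K u| := integral_const_mul _ _
      _ = (B * ∫ u, |u| ^ (n + 1) * |K u|) * h ^ (n + 1) := by ring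
  rw [hsplit, hsum, add_sub_cancel_left]
  exact hRb

set_option maxHeartbeats 1000000 in
/-- **Deterministic representation-error bound for the kernel-smoothed
second-order term (univariate covariate).**
With `q₀` a compactly supported probability density, `g₀ : ℝ → [0,1]`, `q₀` and
`g₀·q₀` being `(m₀+1)`-times continuously differentiable with derivatives
bounded by `B`, and `K` a kernel of order `m₀`, there is a constant `C`
(depending only on `δ`, `m₀`, `K` and the bound `B` on the derivatives of `q₀`
and `g₀·q₀`) such that for all measurable `g, qW ≥ δ`, measurable `Qbar, Qbar0`
with `Qbar − Qbar0 ∈ L²(q₀)`, and all `h > 0`, the kernel-smoothed second-order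
term
`A_h := 2∫ [∫ (1/h)·K((w₁−w₂)/h)·(1 − g₀(w₂)/g(w₁))·q₀(w₂) dw₂]·g₀(w₁)·(Qbar0(w₁) − Qbar(w₁))·q₀(w₁)/(g(w₁)·qW(w₁)) dw₁`
and its small-bandwidth limit
`A₀ := 2∫ q₀(w)·(1 − g₀(w)/g(w))·g₀(w)·(Qbar0(w) − Qbar(w))·q₀(w)/(g(w)·qW(w)) dw`
satisfy `|A_h − A₀| ≤ C·h^{m₀+1}·‖Qbar − Qbar0‖_{L²(q₀)}`. -/
theorem representation_error_bound
    (m₀ : ℕ) (δ : ℝ) (hδ : 0 < δ)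
    (q₀ g₀ K : ℝ → ℝ)
    (hq₀nonneg : ∀ w, 0 ≤ q₀ w)
    (hq₀supp : HasCompactSupport q₀)
    (hq₀unit : ∫ w, q₀ w = 1)
    (hg₀0 : ∀ w, 0 ≤ g₀ w) (hg₀1 : ∀ w, g₀ w ≤ 1)
    (hq₀smooth : ContDiff ℝ (m₀ + 1 : ℕ) q₀)
    (hgq₀smooth : ContDiff ℝ (m₀ + 1 : ℕ) (fun w => g₀ w * q₀ w))
    (B : ℝ)
    (hq₀deriv : ∀ k ≤ m₀ + 1, ∀ t, |iteratedDeriv k q₀ t| ≤ B)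
    (hgq₀deriv : ∀ k ≤ m₀ + 1, ∀ t,
      |iteratedDeriv k (fun w => g₀ w * q₀ w) t| ≤ B)
    (hKint : Integrable K)
    (hKunit : ∫ u, K u = 1)
    (hKorth : ∀ j : ℕ, 1 ≤ j → j ≤ m₀ → ∫ u, u ^ j * K u = 0)
    (hKmom : Integrable (fun u => |u| ^ (m₀ + 1) * |K u|)) :
    ∃ C : ℝ, ∀ g qW Qbar Qbar0 : ℝ → ℝ,
      Measurable g → Measurable qW → Measurable Qbar → Measurable Qbar0 →
      (∀ w, δ ≤ g w) → (∀ w, δ ≤ qW w) →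
      Integrable (fun w => (Qbar w - Qbar0 w) ^ 2 * q₀ w) →
      ∀ h : ℝ, 0 < h →
        |(2 * ∫ w₁,
            (∫ w₂, (1 / h) * K ((w₁ - w₂) / h) * (1 - g₀ w₂ / g w₁) * q₀ w₂)
              * g₀ w₁ * (Qbar0 w₁ - Qbar w₁) * q₀ w₁ / (g w₁ * qW w₁))
          - 2 * ∫ w, q₀ w * (1 - g₀ w / g w) * g₀ w * (Qbar0 w - Qbar w) * q₀ w
              / (g w * qW w)| ≤
          C * h ^ (m₀ + 1) * Real.sqrt (∫ w, (Qbar w - Qbar0 w) ^ 2 * q₀ w) := by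
    classical
  have hq₀cont : Continuous q₀ := hq₀smooth.continuous
  have hgqcont : Continuous (fun w => g₀ w * q₀ w) := hgq₀smooth.continuous
  have q₀int : Integrable q₀ := hq₀cont.integrable_of_hasCompactSupport hq₀supp
  have hBq : ∀ t, |q₀ t| ≤ B := by
    intro t; simpa using hq₀deriv 0 (by omega) t
  have hBgq : ∀ t, |g₀ t * q₀ t| ≤ B := by
    intro t; simpa using hgq₀deriv 0 (by omega) t
  have hB0 : 0 ≤ B := le_trans (abs_nonneg _) (hBq 0)
  set Mm : ℝ := ∫ u, |u| ^ (m₀ + 1) * |K u| with hMm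
  have hM0 : 0 ≤ Mm := integral_nonneg fun u =>
    mul_nonneg (pow_nonneg (abs_nonneg _) _) (abs_nonneg _)
  set KL1 : ℝ := ∫ u, |K u| with hKL1def
  have hKL1 : 0 ≤ KL1 := integral_nonneg fun u => abs_nonneg _
  have hδi : 0 < δ⁻¹ := inv_pos.mpr hδ
  refine ⟨2 * (1 + δ⁻¹) * (B * Mm) * (δ⁻¹ * δ⁻¹), ?_⟩
  intro g qW Qbar Qbar0 hgm hqWm hQm hQ0m hgδ hqWδ hL2 h hh
  have hgpos : ∀ w, 0 < g w := fun w => lt_of_lt_of_le hδ (hgδ w)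
  have hqWpos : ∀ w, 0 < qW w := fun w => lt_of_lt_of_le hδ (hqWδ w)
  have hginv : ∀ w, (g w)⁻¹ ≤ δ⁻¹ := fun w => inv_anti₀ hδ (hgδ w)
  have hginv0 : ∀ w, 0 ≤ (g w)⁻¹ := fun w => (inv_pos.mpr (hgpos w)).le
  -- the smoothed inner integral, rewritten by change of variables
  set inner2 : ℝ → ℝ := fun w => ∫ u,
    K u * (q₀ (w - h * u) - (g₀ (w - h * u) * q₀ (w - h * u)) / g w) with hinner2
  -- change of variables
  have hchg : ∀ w₁ : ℝ,
      (∫ w₂, (1 / h) * K ((w₁ - w₂) / h) * (1 - g₀ w₂ / g w₁) * q₀ w₂)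
        = inner2 w₁ := by
    intro w₁
    set f₀ : ℝ → ℝ := fun v =>
      (1 / h) * K (v / h) * (1 - g₀ (w₁ - v) / g w₁) * q₀ (w₁ - v) with hf₀
    have e1 : (∫ w₂, (1 / h) * K ((w₁ - w₂) / h) * (1 - g₀ w₂ / g w₁) * q₀ w₂)
        = ∫ w₂, f₀ (w₁ - w₂) := by
      congr 1; funext w₂; rw [hf₀]; simp [sub_sub_cancel]
    have e2 := MeasureTheory.Measure.integral_comp_mul_left f₀ h
    have e3 : (∫ v, f₀ v) = h * ∫ u, f₀ (h * u) := by
      rw [e2, abs_of_pos (inv_pos.mpr hh), smul_eq_mul, ← mul_assoc,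
        mul_inv_cancel₀ hh.ne', one_mul]
    rw [e1, integral_sub_left_eq_self f₀ volume w₁, e3, hinner2,
      ← integral_const_mul]
    congr 1; funext u
    simp only [hf₀]
    have hu : h * u / h = u := by field_simp
    rw [hu]
    have hgne : g w₁ ≠ 0 := (hgpos w₁).ne'
    field_simp
  -- measurability of inner2
  have hinner_meas : AEStronglyMeasurable inner2 volume := by
    have h1 : AEStronglyMeasurable (fun z : ℝ × ℝ => K z.2)
        (volume.prod volume) :=
      hKint.aestronglyMeasurable.comp_quasiMeasurePreserving
        Measure.quasiMeasurePreserving_snd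
    have haff : Measurable fun z : ℝ × ℝ => z.1 - h * z.2 :=
      measurable_fst.sub (measurable_snd.const_mul h)
    have h2 : Measurable (fun z : ℝ × ℝ =>
        q₀ (z.1 - h * z.2) - (g₀ (z.1 - h * z.2) * q₀ (z.1 - h * z.2)) / g z.1) :=
      ((hq₀cont.measurable).comp haff).sub
        (((hgqcont.measurable).comp haff).div (hgm.comp measurable_fst))
    exact (h1.mul h2.aestronglyMeasurable).integral_prod_right'
  -- integrability of the integrands of inner2, and pointwise bound
  have intq : ∀ w : ℝ, Integrable (fun u => K u * q₀ (w - h * u)) := by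
    intro w
    refine Integrable.mono' (hKint.abs.const_mul B)
      (hKint.aestronglyMeasurable.mul
        ((hq₀cont.comp (continuous_const.sub
          (continuous_const.mul continuous_id))).aestronglyMeasurable)) ?_
    filter_upwards with u
    rw [Real.norm_eq_abs, abs_mul]
    calc |K u| * |q₀ (w - h * u)| ≤ |K u| * B :=
          mul_le_mul_of_nonneg_left (hBq _) (abs_nonneg _)
      _ = B * |K u| := mul_comm _ _
  have intgq : ∀ w : ℝ, Integrable
      (fun u => K u * (g₀ (w - h * u) * q₀ (w - h * u))) := by
    intro w
    refine Integrable.mono' (hKint.abs.const_mul B)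
      (hKint.aestronglyMeasurable.mul
        ((hgqcont.comp (continuous_const.sub
          (continuous_const.mul continuous_id))).aestronglyMeasurable)) ?_
    filter_upwards with u
    rw [Real.norm_eq_abs, abs_mul]
    calc |K u| * |g₀ (w - h * u) * q₀ (w - h * u)| ≤ |K u| * B :=
          mul_le_mul_of_nonneg_left (hBgq _) (abs_nonneg _)
      _ = B * |K u| := mul_comm _ _
  -- split inner2 into two convolutions
  have hsplit : ∀ w : ℝ, inner2 w
      = (∫ u, K u * q₀ (w - h * u))
        - (g w)⁻¹ * ∫ u, K u * (g₀ (w - h * u) * q₀ (w - h * u)) := by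
    intro w
    have e : inner2 w = ∫ u, (K u * q₀ (w - h * u)
        - (g w)⁻¹ * (K u * (g₀ (w - h * u) * q₀ (w - h * u)))) := by
      simp only [hinner2]
      congr 1; funext u
      rw [div_eq_mul_inv]
      ring
    rw [e, integral_sub (intq w) ((intgq w).const_mul _), integral_const_mul]
  -- target function
  set target2 : ℝ → ℝ := fun w => q₀ w - (g w)⁻¹ * (g₀ w * q₀ w) with htarget2
  -- deviation bound
  have hD : ∀ w, |inner2 w - target2 w|
      ≤ ((1 + δ⁻¹) * (B * Mm)) * h ^ (m₀ + 1) := by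
    intro w
    have hq := conv_bound m₀ K q₀ B hKint hKunit hKorth hKmom
      hq₀smooth hq₀deriv w h hh
    have hgq := conv_bound m₀ K (fun w => g₀ w * q₀ w) B hKint hKunit hKorth
      hKmom hgq₀smooth hgq₀deriv w h hh
    rw [← hMm] at hq hgq
    have hBM : 0 ≤ (B * Mm) * h ^ (m₀ + 1) :=
      mul_nonneg (mul_nonneg hB0 hM0) (pow_nonneg hh.le _)
    rw [hsplit w, htarget2]
    have e : (∫ u, K u * q₀ (w - h * u))
          - (g w)⁻¹ * (∫ u, K u * (g₀ (w - h * u) * q₀ (w - h * u)))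
          - (q₀ w - (g w)⁻¹ * (g₀ w * q₀ w))
        = ((∫ u, K u * q₀ (w - h * u)) - q₀ w)
          - (g w)⁻¹ * ((∫ u, K u * (g₀ (w - h * u) * q₀ (w - h * u)))
            - g₀ w * q₀ w) := by ring
    rw [e]
    calc |((∫ u, K u * q₀ (w - h * u)) - q₀ w)
          - (g w)⁻¹ * ((∫ u, K u * (g₀ (w - h * u) * q₀ (w - h * u)))
            - g₀ w * q₀ w)|
        ≤ |(∫ u, K u * q₀ (w - h * u)) - q₀ w|
          + |(g w)⁻¹ * ((∫ u, K u * (g₀ (w - h * u) * q₀ (w - h * u)))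
            - g₀ w * q₀ w)| := abs_sub _ _
      _ ≤ (B * Mm) * h ^ (m₀ + 1) + δ⁻¹ * ((B * Mm) * h ^ (m₀ + 1)) := by
          refine add_le_add hq ?_
          rw [abs_mul, abs_of_nonneg (hginv0 w)]
          exact mul_le_mul (hginv w) hgq (abs_nonneg _) hδi.le
      _ = ((1 + δ⁻¹) * (B * Mm)) * h ^ (m₀ + 1) := by ring
  -- bounds on inner2 and target2
  have hint2bd : ∀ w, |inner2 w| ≤ (B * (1 + δ⁻¹)) * KL1 := by
    intro w
    have hptb : ∀ u, |K u * (q₀ (w - h * u)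
        - (g₀ (w - h * u) * q₀ (w - h * u)) / g w)|
        ≤ (B * (1 + δ⁻¹)) * |K u| := by
      intro u
      rw [abs_mul]
      have : |q₀ (w - h * u) - (g₀ (w - h * u) * q₀ (w - h * u)) / g w|
          ≤ B + δ⁻¹ * B := by
        calc |q₀ (w - h * u) - (g₀ (w - h * u) * q₀ (w - h * u)) / g w|
            ≤ |q₀ (w - h * u)| + |(g₀ (w - h * u) * q₀ (w - h * u)) / g w| :=
              abs_sub _ _
          _ ≤ B + δ⁻¹ * B := by
              refine add_le_add (hBq _) ?_
              rw [div_eq_mul_inv, abs_mul, abs_of_nonneg (hginv0 w)]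
              rw [mul_comm]
              exact mul_le_mul (hginv w) (hBgq _) (abs_nonneg _) hδi.le
      calc |K u| * |q₀ (w - h * u) - (g₀ (w - h * u) * q₀ (w - h * u)) / g w|
          ≤ |K u| * (B + δ⁻¹ * B) :=
            mul_le_mul_of_nonneg_left this (abs_nonneg _)
        _ = (B * (1 + δ⁻¹)) * |K u| := by ring
    have intw : Integrable (fun u => K u * (q₀ (w - h * u)
        - (g₀ (w - h * u) * q₀ (w - h * u)) / g w)) := by
      have e : (fun u => K u * (q₀ (w - h * u)
          - (g₀ (w - h * u) * q₀ (w - h * u)) / g w))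
          = fun u => K u * q₀ (w - h * u)
            - (g w)⁻¹ * (K u * (g₀ (w - h * u) * q₀ (w - h * u))) := by
        funext u; rw [div_eq_mul_inv]; ring
      rw [e]
      exact (intq w).sub ((intgq w).const_mul _)
    calc |inner2 w| ≤ ∫ u, |K u * (q₀ (w - h * u)
          - (g₀ (w - h * u) * q₀ (w - h * u)) / g w)| := by
          simp only [hinner2]
          simpa [Real.norm_eq_abs, abs_mul] using norm_integral_le_integral_norm
            (μ := volume) (fun u => K u * (q₀ (w - h * u)
              - (g₀ (w - h * u) * q₀ (w - h * u)) / g w))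
      _ ≤ ∫ u, (B * (1 + δ⁻¹)) * |K u| :=
          integral_mono intw.abs (hKint.abs.const_mul _) hptb
      _ = (B * (1 + δ⁻¹)) * KL1 := integral_const_mul _ _
  have htarget2bd : ∀ w, |target2 w| ≤ B * (1 + δ⁻¹) := by
    intro w
    rw [htarget2]
    calc |q₀ w - (g w)⁻¹ * (g₀ w * q₀ w)|
        ≤ |q₀ w| + |(g w)⁻¹ * (g₀ w * q₀ w)| := abs_sub _ _
      _ ≤ B + δ⁻¹ * B := by
          refine add_le_add (hBq _) ?_
          rw [abs_mul, abs_of_nonneg (hginv0 w)]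
          exact mul_le_mul (hginv w) (hBgq _) (abs_nonneg _) hδi.le
      _ = B * (1 + δ⁻¹) := by ring
  -- the weight function
  set s' : ℝ → ℝ := fun w =>
    (g₀ w * q₀ w) * (Qbar0 w - Qbar w) / (g w * qW w) with hs'
  have hs'meas : Measurable s' :=
    ((hgqcont.measurable).mul (hQ0m.sub hQm)).div (hgm.mul hqWm)
  set t : ℝ → ℝ := fun w => |Qbar0 w - Qbar w| * q₀ w with ht
  have htnonneg : ∀ w, 0 ≤ t w := fun w =>
    mul_nonneg (abs_nonneg _) (hq₀nonneg w)
  have ht_meas : AEStronglyMeasurable t volume :=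
    (((hQ0m.sub hQm).abs).mul hq₀cont.measurable).aestronglyMeasurable
  have ht_int : Integrable t := by
    refine Integrable.mono' ((hL2.add q₀int).div_const 2) ht_meas ?_
    filter_upwards with w
    simp only [Real.norm_eq_abs, ht, Pi.add_apply]
    have h1 : 0 ≤ (|Qbar0 w - Qbar w| - 1) ^ 2 * q₀ w :=
      mul_nonneg (sq_nonneg _) (hq₀nonneg w)
    rw [abs_of_nonneg (mul_nonneg (abs_nonneg _) (hq₀nonneg w))]
    nlinarith [hq₀nonneg w, sq_abs (Qbar0 w - Qbar w)]
  have hs'bd : ∀ w, |s' w| ≤ δ⁻¹ * δ⁻¹ * t w := by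
    intro w
    simp only [hs', ht]
    rw [abs_div, abs_mul]
    have hgqw : 0 < g w * qW w := mul_pos (hgpos w) (hqWpos w)
    have hδδ : δ * δ ≤ g w * qW w :=
      mul_le_mul (hgδ w) (hqWδ w) hδ.le (hgpos w).le
    have hnum : |g₀ w * q₀ w| * |Qbar0 w - Qbar w|
        ≤ |Qbar0 w - Qbar w| * q₀ w := by
      have : |g₀ w * q₀ w| ≤ q₀ w := by
        rw [abs_of_nonneg (mul_nonneg (hg₀0 w) (hq₀nonneg w))]
        nlinarith [hg₀1 w, hq₀nonneg w, hg₀0 w]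
      calc |g₀ w * q₀ w| * |Qbar0 w - Qbar w| ≤ q₀ w * |Qbar0 w - Qbar w| :=
            mul_le_mul_of_nonneg_right this (abs_nonneg _)
        _ = |Qbar0 w - Qbar w| * q₀ w := mul_comm _ _
    rw [abs_of_pos hgqw]
    have step1 : |g₀ w * q₀ w| * |Qbar0 w - Qbar w| / (g w * qW w)
        ≤ (|Qbar0 w - Qbar w| * q₀ w) / (g w * qW w) :=
      (div_le_div_iff_of_pos_right hgqw).mpr hnum
    have htw0 : 0 ≤ |Qbar0 w - Qbar w| * q₀ w :=
      mul_nonneg (abs_nonneg _) (hq₀nonneg w)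
    have step2 : (|Qbar0 w - Qbar w| * q₀ w) / (g w * qW w)
        ≤ (|Qbar0 w - Qbar w| * q₀ w) / (δ * δ) :=
      div_le_div_of_nonneg_left htw0 (mul_pos hδ hδ) hδδ
    have step3 : (|Qbar0 w - Qbar w| * q₀ w) / (δ * δ)
        = δ⁻¹ * δ⁻¹ * (|Qbar0 w - Qbar w| * q₀ w) := by
      rw [div_eq_mul_inv, mul_inv]
      ring
    linarith
  -- Cauchy-Schwarz
  have hSnn : 0 ≤ ∫ w, (Qbar w - Qbar0 w) ^ 2 * q₀ w :=
    integral_nonneg fun w => mul_nonneg (sq_nonneg _) (hq₀nonneg w)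
  have hCS : ∫ w, t w ≤ Real.sqrt (∫ w, (Qbar w - Qbar0 w) ^ 2 * q₀ w) := by
    set Sv : ℝ := ∫ w, (Qbar w - Qbar0 w) ^ 2 * q₀ w with hSv
    rcases eq_or_lt_of_le hSnn with hS0 | hSpos
    · have hz := (integral_eq_zero_iff_of_nonneg
        (fun w => mul_nonneg (sq_nonneg _) (hq₀nonneg w)) hL2).mp hS0.symm
      have htz : t =ᵐ[volume] 0 := by
        filter_upwards [hz] with w hw
        simp only [Pi.zero_apply] at hw ⊢
        rcases mul_eq_zero.mp hw with h1 | h1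
        · have : Qbar0 w - Qbar w = 0 := by
            have := pow_eq_zero_iff (n := 2) (by omega) |>.mp h1
            linarith
          simp only [ht]
          simp [this]
        · simp only [ht]
          rw [h1, mul_zero]
      rw [integral_congr_ae htz]
      simpa using Real.sqrt_nonneg Sv
    · set r : ℝ := Real.sqrt Sv with hrdef
      have hr : 0 < r := Real.sqrt_pos.mpr hSpos
      have hr2 : r ^ 2 = Sv := Real.sq_sqrt hSnn
      have hpt : ∀ w, 2 * r * t w
          ≤ (Qbar w - Qbar0 w) ^ 2 * q₀ w + r ^ 2 * q₀ w := by
        intro w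
        have h1 : 0 ≤ (|Qbar0 w - Qbar w| - r) ^ 2 * q₀ w :=
          mul_nonneg (sq_nonneg _) (hq₀nonneg w)
        simp only [ht]
        nlinarith [hq₀nonneg w, sq_abs (Qbar0 w - Qbar w)]
      have hmono : ∫ w, 2 * r * t w
          ≤ ∫ w, ((Qbar w - Qbar0 w) ^ 2 * q₀ w + r ^ 2 * q₀ w) :=
        integral_mono (ht_int.const_mul _) (hL2.add (q₀int.const_mul _)) hpt
      rw [integral_const_mul, integral_add hL2 (q₀int.const_mul _),
        integral_const_mul, hq₀unit, mul_one, ← hSv, ← hr2] at hmono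
      nlinarith
  -- integrability of the two outer integrands
  have hPint : Integrable (fun w => inner2 w * s' w) := by
    refine Integrable.mono'
      (ht_int.const_mul ((B * (1 + δ⁻¹)) * KL1 * (δ⁻¹ * δ⁻¹)))
      (hinner_meas.mul hs'meas.aestronglyMeasurable) ?_
    filter_upwards with w
    rw [Real.norm_eq_abs, abs_mul]
    have c1 : 0 ≤ (B * (1 + δ⁻¹)) * KL1 :=
      mul_nonneg (mul_nonneg hB0 (by positivity)) hKL1
    calc |inner2 w| * |s' w| ≤ ((B * (1 + δ⁻¹)) * KL1) * (δ⁻¹ * δ⁻¹ * t w) :=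
          mul_le_mul (hint2bd w) (hs'bd w) (abs_nonneg _) c1
      _ = ((B * (1 + δ⁻¹)) * KL1 * (δ⁻¹ * δ⁻¹)) * t w := by ring
  have hQint : Integrable (fun w => target2 w * s' w) := by
    refine Integrable.mono'
      (ht_int.const_mul ((B * (1 + δ⁻¹)) * (δ⁻¹ * δ⁻¹)))
      (((((hq₀cont.measurable).sub
        ((hgm.inv).mul hgqcont.measurable)).mul hs'meas)).aestronglyMeasurable) ?_
    filter_upwards with w
    rw [Real.norm_eq_abs, abs_mul]
    have c1 : 0 ≤ B * (1 + δ⁻¹) := mul_nonneg hB0 (by positivity)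
    calc |target2 w| * |s' w| ≤ (B * (1 + δ⁻¹)) * (δ⁻¹ * δ⁻¹ * t w) :=
          mul_le_mul (htarget2bd w) (hs'bd w) (abs_nonneg _) c1
      _ = ((B * (1 + δ⁻¹)) * (δ⁻¹ * δ⁻¹)) * t w := by ring
  -- rewrite the two integrals in the goal
  have eP : (∫ w₁, (∫ w₂, (1 / h) * K ((w₁ - w₂) / h) * (1 - g₀ w₂ / g w₁)
        * q₀ w₂) * g₀ w₁ * (Qbar0 w₁ - Qbar w₁) * q₀ w₁ / (g w₁ * qW w₁))
      = ∫ w, inner2 w * s' w := by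
    congr 1; funext w
    rw [hchg w, hs']
    ring
  have eQ : (∫ w, q₀ w * (1 - g₀ w / g w) * g₀ w * (Qbar0 w - Qbar w) * q₀ w
        / (g w * qW w))
      = ∫ w, target2 w * s' w := by
    congr 1; funext w
    rw [htarget2, hs']
    field_simp
  rw [eP, eQ, ← mul_sub, ← integral_sub hPint hQint]
  have eD : (fun w => inner2 w * s' w - target2 w * s' w)
      = fun w => (inner2 w - target2 w) * s' w := by
    funext w; ring
  rw [eD, abs_mul, abs_two]
  have hDSint : Integrable (fun w => (inner2 w - target2 w) * s' w) := by
    rw [← eD]; exact hPint.sub hQint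
  have hptfin : ∀ w, |(inner2 w - target2 w) * s' w|
      ≤ (((1 + δ⁻¹) * (B * Mm)) * h ^ (m₀ + 1)) * (δ⁻¹ * δ⁻¹ * t w) := by
    intro w
    rw [abs_mul]
    have hE0 : 0 ≤ ((1 + δ⁻¹) * (B * Mm)) * h ^ (m₀ + 1) :=
      mul_nonneg (mul_nonneg (by positivity) (mul_nonneg hB0 hM0))
        (pow_nonneg hh.le _)
    exact mul_le_mul (hD w) (hs'bd w) (abs_nonneg _) hE0
  calc 2 * |∫ w, (inner2 w - target2 w) * s' w|
      ≤ 2 * ∫ w, |inner2 w - target2 w| * |s' w| := by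
        refine mul_le_mul_of_nonneg_left ?_ (by norm_num)
        simpa [Real.norm_eq_abs, abs_mul] using norm_integral_le_integral_norm
          (μ := volume) (fun w => (inner2 w - target2 w) * s' w)
    _ ≤ 2 * ∫ w, (((1 + δ⁻¹) * (B * Mm)) * h ^ (m₀ + 1)) * (δ⁻¹ * δ⁻¹ * t w) := by
        refine mul_le_mul_of_nonneg_left ?_ (by norm_num)
        have hint2 : Integrable
            (fun w => (((1 + δ⁻¹) * (B * Mm)) * h ^ (m₀ + 1)) * (δ⁻¹ * δ⁻¹ * t w)) :=
          (ht_int.const_mul (δ⁻¹ * δ⁻¹)).const_mul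
            (((1 + δ⁻¹) * (B * Mm)) * h ^ (m₀ + 1))
        have habs : Integrable (fun w => |inner2 w - target2 w| * |s' w|) := by
          have := hDSint.abs
          simpa [abs_mul] using this
        refine integral_mono habs hint2 ?_
        intro w
        have := hptfin w
        rwa [abs_mul] at this
    _ = (2 * (1 + δ⁻¹) * (B * Mm) * (δ⁻¹ * δ⁻¹) * h ^ (m₀ + 1)) * ∫ w, t w := by
        have e : (fun w => (((1 + δ⁻¹) * (B * Mm)) * h ^ (m₀ + 1))
            * (δ⁻¹ * δ⁻¹ * t w))
            = fun w => ((((1 + δ⁻¹) * (B * Mm)) * h ^ (m₀ + 1))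
              * (δ⁻¹ * δ⁻¹)) * t w := by
          funext w; ring
        rw [e, integral_const_mul]
        ring
    _ ≤ 2 * (1 + δ⁻¹) * (B * Mm) * (δ⁻¹ * δ⁻¹) * h ^ (m₀ + 1)
          * Real.sqrt (∫ w, (Qbar w - Qbar0 w) ^ 2 * q₀ w) := by
        refine mul_le_mul_of_nonneg_left hCS ?_
        have : 0 ≤ B * Mm := mul_nonneg hB0 hM0
        positivity
    _ = 2 * (1 + δ⁻¹) * (B * Mm) * (δ⁻¹ * δ⁻¹) * h ^ (m₀ + 1)
          * Real.sqrt (∫ w, (Qbar w - Qbar0 w) ^ 2 * q₀ w) := rfl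
end

section
/- The remainder R₃ is third order: define R₃(P,P₀) := ∫ (1 − g₀(w)·q₀(w)/(g(w)·q_W(w)))·(1 − g₀(w)/g(w))·(Q̄(w) − Q̄₀(w)) dQ_{W,0}(w). If g(w) ≥ δ and g(w)·q_W(w) ≥ δ′ for all w, then |R₃(P,P₀)| ≤ (1/(δ·δ′))·‖g·q_W − g₀·q₀‖_{L⁴(Q_{W,0})}·‖g − g₀‖_{L⁴(Q_{W,0})}·‖Q̄ − Q̄₀‖_{L²(Q_{W,0})}. -/
open MeasureTheory ENNReal

/-- **The remainder `R₃` is third order.**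
With `R₃ := ∫ (1 − g₀·q₀/(g·qW))·(1 − g₀/g)·(Qbar − Qbar0) dQW0`, if
`g ≥ δ` and `g·qW ≥ δ′` everywhere, then by the generalized Hölder inequality
with exponents `(4,4,2)`,
`|R₃| ≤ (1/(δ·δ′))·‖g·qW − g₀·q₀‖_{L⁴}·‖g − g₀‖_{L⁴}·‖Qbar − Qbar0‖_{L²}`,
where `‖f‖_{L^p(QW0)}^p := ∫ |f|^p dQW0`. -/
theorem remainder_R3_third_order
    {W : Type*} [MeasurableSpace W]
    (QW0 : Measure W) [IsProbabilityMeasure QW0]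
    (g g₀ qW q₀ Qbar Qbar0 : W → ℝ) (δ δ' : ℝ) (hδ : 0 < δ) (hδ' : 0 < δ')
    (hgmeas : Measurable g) (hg₀meas : Measurable g₀)
    (hqWmeas : Measurable qW) (hq₀meas : Measurable q₀)
    (hQbarmeas : Measurable Qbar) (hQbar0meas : Measurable Qbar0)
    (hgq : MemLp (fun w => g w * qW w - g₀ w * q₀ w) 4 QW0)
    (hgg : MemLp (fun w => g w - g₀ w) 4 QW0)
    (hQQ : MemLp (fun w => Qbar w - Qbar0 w) 2 QW0)
    (hgδ : ∀ w, δ ≤ g w) (hgqδ : ∀ w, δ' ≤ g w * qW w) :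
    |∫ w, (1 - g₀ w * q₀ w / (g w * qW w)) * (1 - g₀ w / g w)
        * (Qbar w - Qbar0 w) ∂QW0| ≤
      (1 / (δ * δ'))
        * (∫ w, |g w * qW w - g₀ w * q₀ w| ^ (4 : ℕ) ∂QW0) ^ ((1 : ℝ) / 4)
        * (∫ w, |g w - g₀ w| ^ (4 : ℕ) ∂QW0) ^ ((1 : ℝ) / 4)
        * (∫ w, (Qbar w - Qbar0 w) ^ (2 : ℕ) ∂QW0) ^ ((1 : ℝ) / 2) := by
  set A : W → ℝ := fun w => g w * qW w - g₀ w * q₀ w with hA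
  set B : W → ℝ := fun w => g w - g₀ w with hB
  set C : W → ℝ := fun w => Qbar w - Qbar0 w with hC
  have hg0 : ∀ w, (0:ℝ) < g w := fun w => lt_of_lt_of_le hδ (hgδ w)
  have hgq0 : ∀ w, (0:ℝ) < g w * qW w := fun w => lt_of_lt_of_le hδ' (hgqδ w)
  have hδδ' : (0:ℝ) < δ * δ' := mul_pos hδ hδ'
  have h44 : (1:ℝ≥0∞)/2 = 1/4 + 1/4 := by
    rw [ENNReal.div_add_div_same, ENNReal.div_eq_div_iff] <;> norm_num
  have h22 : (1:ℝ≥0∞)/1 = 1/2 + 1/2 := by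
    rw [ENNReal.div_add_div_same, ENNReal.div_eq_div_iff] <;> norm_num
  -- MemLp facts
  have hAB2 : MemLp (fun w => A w * B w) 2 QW0 := by
    have := (hgg.smul (𝕜 := ℝ) hgq (hpqr := ⟨by simpa [one_div] using h44.symm⟩))
    simpa [Pi.smul_apply, smul_eq_mul, Pi.mul_def] using this
  have hA2 : MemLp (fun w => A w ^ 2) 2 QW0 := by
    have := (hgq.smul (𝕜 := ℝ) hgq (hpqr := ⟨by simpa [one_div] using h44.symm⟩))
    simpa [Pi.smul_apply, smul_eq_mul, sq, Pi.mul_def] using this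
  have hB2 : MemLp (fun w => B w ^ 2) 2 QW0 := by
    have := (hgg.smul (𝕜 := ℝ) hgg (hpqr := ⟨by simpa [one_div] using h44.symm⟩))
    simpa [Pi.smul_apply, smul_eq_mul, sq, Pi.mul_def] using this
  have hABC1 : MemLp (fun w => A w * B w * C w) 1 QW0 := by
    have := (hQQ.smul (𝕜 := ℝ) hAB2 (r := 1) (hpqr := ⟨by simpa [one_div] using h22.symm⟩))
    simpa [Pi.smul_apply, smul_eq_mul, Pi.mul_def] using this
  have hABCint : Integrable (fun w => A w * B w * C w) QW0 :=
    memLp_one_iff_integrable.mp hABC1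
  have hmaj : Integrable (fun w => (1/(δ*δ')) * |A w * B w * C w|) QW0 :=
    hABCint.abs.const_mul _
  -- pointwise bound
  have hbound : ∀ w, ‖(1 - g₀ w * q₀ w / (g w * qW w)) * (1 - g₀ w / g w) * (Qbar w - Qbar0 w)‖
      ≤ (1/(δ*δ')) * |A w * B w * C w| := by
    intro w
    rw [one_sub_div (hgq0 w).ne', one_sub_div (hg0 w).ne']
    have hrw : (1/(δ*δ')) * |A w * B w * C w| = (|A w|/δ') * (|B w|/δ) * |C w| := by
      rw [abs_mul, abs_mul, one_div_mul_eq_div, div_mul_div_comm, div_mul_eq_mul_div,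
        mul_comm δ' δ]
    rw [Real.norm_eq_abs, abs_mul, abs_mul, abs_div, abs_div, hrw]
    have h1 : |A w| / |g w * qW w| ≤ |A w| / δ' :=
      div_le_div_of_nonneg_left (abs_nonneg _) hδ' ((hgqδ w).trans (le_abs_self _))
    have h2 : |B w| / |g w| ≤ |B w| / δ :=
      div_le_div_of_nonneg_left (abs_nonneg _) hδ ((hgδ w).trans (le_abs_self _))
    have := mul_le_mul h1 h2 (div_nonneg (abs_nonneg _) (abs_nonneg _))
      (div_nonneg (abs_nonneg _) hδ'.le)
    exact mul_le_mul_of_nonneg_right this (abs_nonneg _)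
  -- step 1: |∫| ≤ (1/(δδ')) ∫ |ABC|
  have step1 : |∫ w, (1 - g₀ w * q₀ w / (g w * qW w)) * (1 - g₀ w / g w)
      * (Qbar w - Qbar0 w) ∂QW0| ≤ (1/(δ*δ')) * ∫ w, |A w * B w * C w| ∂QW0 := by
    rw [← Real.norm_eq_abs, ← integral_const_mul]
    exact norm_integral_le_of_norm_le hmaj (Filter.Eventually.of_forall hbound)
  -- notation for the integrals
  set IA : ℝ := ∫ w, |A w| ^ (4:ℕ) ∂QW0 with hIA
  set IB : ℝ := ∫ w, |B w| ^ (4:ℕ) ∂QW0 with hIB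
  set IC : ℝ := ∫ w, C w ^ (2:ℕ) ∂QW0 with hIC
  have hIAnn : 0 ≤ IA := integral_nonneg fun w => by positivity
  have hIBnn : 0 ≤ IB := integral_nonneg fun w => by positivity
  have h2 : Real.HolderConjugate 2 2 := Real.holderConjugate_iff.mpr ⟨one_lt_two, by norm_num⟩
  have ofr2 : ENNReal.ofReal (2:ℝ) = 2 := by
    rw [ENNReal.ofReal_ofNat]
  -- Hölder for A², B² with exponents (2,2)
  have hAB4 : ∫ w, A w ^ 2 * B w ^ 2 ∂QW0 ≤ IA ^ ((1:ℝ)/2) * IB ^ ((1:ℝ)/2) := by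
    have := integral_mul_le_Lp_mul_Lq_of_nonneg (μ := QW0) h2
      (Filter.Eventually.of_forall fun w => sq_nonneg (A w))
      (Filter.Eventually.of_forall fun w => sq_nonneg (B w))
      (ofr2 ▸ hA2) (ofr2 ▸ hB2)
    have e1 : ∀ w, (A w ^ 2) ^ (2:ℝ) = |A w| ^ (4:ℕ) := by
      intro w
      rw [show (2:ℝ) = ((2:ℕ):ℝ) by norm_num, Real.rpow_natCast, ← pow_mul, ← abs_pow,
        abs_of_nonneg (by positivity)]
    have e2 : ∀ w, (B w ^ 2) ^ (2:ℝ) = |B w| ^ (4:ℕ) := by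
      intro w
      rw [show (2:ℝ) = ((2:ℕ):ℝ) by norm_num, Real.rpow_natCast, ← pow_mul, ← abs_pow,
        abs_of_nonneg (by positivity)]
    have eqa : (∫ w, (A w ^ 2) ^ (2:ℝ) ∂QW0) = IA :=
      integral_congr_ae (Filter.Eventually.of_forall e1)
    have eqb : (∫ w, (B w ^ 2) ^ (2:ℝ) ∂QW0) = IB :=
      integral_congr_ae (Filter.Eventually.of_forall e2)
    rw [eqa, eqb] at this
    exact this
  -- Hölder for AB and C with exponents (2,2)
  have hstep2 : ∫ w, |A w * B w * C w| ∂QW0 ≤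
      (∫ w, A w ^ 2 * B w ^ 2 ∂QW0) ^ ((1:ℝ)/2) * IC ^ ((1:ℝ)/2) := by
    have := integral_mul_norm_le_Lp_mul_Lq (μ := QW0) (f := fun w => A w * B w) (g := C) h2
      (ofr2 ▸ hAB2) (ofr2 ▸ hQQ)
    have e0 : ∀ w, ‖A w * B w‖ * ‖C w‖ = |A w * B w * C w| := by
      intro w
      rw [Real.norm_eq_abs, Real.norm_eq_abs]
      exact (abs_mul (A w * B w) (C w)).symm
    have e1 : ∀ w, ‖A w * B w‖ ^ (2:ℝ) = A w ^ 2 * B w ^ 2 := by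
      intro w
      rw [show (2:ℝ) = ((2:ℕ):ℝ) by norm_num, Real.rpow_natCast, Real.norm_eq_abs, ← abs_pow,
        mul_pow, abs_of_nonneg (by positivity)]
    have e2 : ∀ w, ‖C w‖ ^ (2:ℝ) = C w ^ (2:ℕ) := by
      intro w
      rw [show (2:ℝ) = ((2:ℕ):ℝ) by norm_num, Real.rpow_natCast, Real.norm_eq_abs, ← abs_pow,
        abs_of_nonneg (by positivity)]
    have eq0 : (∫ w, ‖A w * B w‖ * ‖C w‖ ∂QW0) = ∫ w, |A w * B w * C w| ∂QW0 :=
      integral_congr_ae (Filter.Eventually.of_forall e0)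
    have eqa : (∫ w, ‖A w * B w‖ ^ (2:ℝ) ∂QW0) = ∫ w, A w ^ 2 * B w ^ 2 ∂QW0 :=
      integral_congr_ae (Filter.Eventually.of_forall e1)
    have eqc : (∫ w, ‖C w‖ ^ (2:ℝ) ∂QW0) = IC :=
      integral_congr_ae (Filter.Eventually.of_forall e2)
    rw [eq0, eqa, eqc] at this
    exact this
  -- combine
  have hICnn : 0 ≤ IC ^ ((1:ℝ)/2) := Real.rpow_nonneg (integral_nonneg fun w => sq_nonneg _) _
  have key : ∫ w, |A w * B w * C w| ∂QW0 ≤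
      IA ^ ((1:ℝ)/4) * IB ^ ((1:ℝ)/4) * IC ^ ((1:ℝ)/2) := by
    refine hstep2.trans ?_
    have h3 : (∫ w, A w ^ 2 * B w ^ 2 ∂QW0) ^ ((1:ℝ)/2) ≤
        IA ^ ((1:ℝ)/4) * IB ^ ((1:ℝ)/4) := by
      have := Real.rpow_le_rpow (integral_nonneg fun w => by positivity) hAB4 (by norm_num : (0:ℝ) ≤ 1/2)
      calc (∫ w, A w ^ 2 * B w ^ 2 ∂QW0) ^ ((1:ℝ)/2)
          ≤ (IA ^ ((1:ℝ)/2) * IB ^ ((1:ℝ)/2)) ^ ((1:ℝ)/2) := this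
        _ = IA ^ ((1:ℝ)/4) * IB ^ ((1:ℝ)/4) := by
            rw [Real.mul_rpow (Real.rpow_nonneg hIAnn _) (Real.rpow_nonneg hIBnn _),
              ← Real.rpow_mul hIAnn, ← Real.rpow_mul hIBnn]
            norm_num
    exact mul_le_mul_of_nonneg_right h3 hICnn
  calc |∫ w, (1 - g₀ w * q₀ w / (g w * qW w)) * (1 - g₀ w / g w)
      * (Qbar w - Qbar0 w) ∂QW0|
      ≤ (1/(δ*δ')) * ∫ w, |A w * B w * C w| ∂QW0 := step1
    _ ≤ (1/(δ*δ')) * (IA ^ ((1:ℝ)/4) * IB ^ ((1:ℝ)/4) * IC ^ ((1:ℝ)/2)) :=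
        mul_le_mul_of_nonneg_left key (by positivity)
    _ = (1/(δ*δ')) * IA ^ ((1:ℝ)/4) * IB ^ ((1:ℝ)/4) * IC ^ ((1:ℝ)/2) := by ring
end
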